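/- arXiv:1310.3569 — 9 statements merged into one kernel-verified Lean document; each statement's English description precedes it below -/
import Mathlib

section
/- Let k be a field of characteristic ≠ 2 containing an element ζ with ζ² = −1. Let R = k[x₁,y₁,x₂,y₂,x₃,y₃]/(yᵢ² − xᵢ(xᵢ²−1), i = 1,2,3), which is an integral domain, let K = Frac(R), and assume the images of all xᵢ, yᵢ are nonzero in K. Let g be the k-automorphism of K determined by g(xᵢ) = −xᵢ and g(yᵢ) = ζ·yᵢ for i = 1,2,3. Set b₂ = x₂/x₁, b₃ = x₃/x₁, a₂ = y₂/y₁, a₃ = y₃/y₁, u₁ = x₁², w₁ = y₁⁴, λ₁ = x₁y₁². Then the fixed field K^g = { f ∈ K : g(f) = f } equals the subfield L = k(b₂, b₃, a₂, a₃, u₁, w₁, λ₁) of K generated over k by b₂, b₃, a₂, a₃, u₁, w₁, λ₁. -/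
open MvPolynomial

noncomputable section

/-- The ideal of `k[x₁,y₁,x₂,y₂,x₃,y₃]` generated by the three relations
`yᵢ² - xᵢ(xᵢ² - 1)`, `i = 1,2,3`.  Variables are indexed so that
`x₁ = X 0`, `y₁ = X 1`, `x₂ = X 2`, `y₂ = X 3`, `x₃ = X 4`, `y₃ = X 5`. -/
def uenoIdeal (k : Type*) [Field k] : Ideal (MvPolynomial (Fin 6) k) :=
  Ideal.span { X 1 ^ 2 - X 0 * (X 0 ^ 2 - 1),
               X 3 ^ 2 - X 2 * (X 2 ^ 2 - 1),
               X 5 ^ 2 - X 4 * (X 4 ^ 2 - 1) }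

variable (k : Type*) [Field k] [(uenoIdeal k).IsPrime]

/-- `R = k[x₁,y₁,x₂,y₂,x₃,y₃]/(yᵢ² - xᵢ(xᵢ² - 1), i = 1,2,3)`, the affine coordinate ring of
`Z = C₁ × C₂ × C₃`; it is an integral domain (the defining ideal being prime). -/
abbrev UenoRing : Type _ := MvPolynomial (Fin 6) k ⧸ uenoIdeal k

/-- `K = Frac(R) = k(Z)`, the function field of `Z = C₁ × C₂ × C₃`. -/
abbrev UenoField : Type _ := FractionRing (UenoRing k)

/-- The image in `K = Frac(R)` of the `i`-th variable. -/
def xv (i : Fin 6) : UenoField k :=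
  algebraMap (UenoRing k) (UenoField k) (Ideal.Quotient.mk (uenoIdeal k) (X i))

/-- `x₁` as an element of `K`. -/ def x1 : UenoField k := xv k 0
/-- `y₁` as an element of `K`. -/ def y1 : UenoField k := xv k 1
/-- `x₂` as an element of `K`. -/ def x2 : UenoField k := xv k 2
/-- `y₂` as an element of `K`. -/ def y2 : UenoField k := xv k 3
/-- `x₃` as an element of `K`. -/ def x3 : UenoField k := xv k 4
/-- `y₃` as an element of `K`. -/ def y3 : UenoField k := xv k 5

/-- `b₂ = x₂/x₁`. -/ def b2 : UenoField k := x2 k / x1 k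
/-- `b₃ = x₃/x₁`. -/ def b3 : UenoField k := x3 k / x1 k
/-- `a₂ = y₂/y₁`. -/ def a2 : UenoField k := y2 k / y1 k
/-- `a₃ = y₃/y₁`. -/ def a3 : UenoField k := y3 k / y1 k

section FieldHelpers

variable {F K : Type*} [Field F] [Field K] [Algebra F K]

theorem helper_mem_fixedField (g : K ≃ₐ[F] K) {z : K} (h : g z = z) :
    z ∈ IntermediateField.fixedField (Subgroup.zpowers g) := by
  have hstab : Subgroup.zpowers g ≤ MulAction.stabilizer (K ≃ₐ[F] K) z :=
    Subgroup.zpowers_le.mpr (by simpa [MulAction.mem_stabilizer_iff, AlgEquiv.smul_def] using h)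
  exact fun σ => hstab σ.2

theorem helper_fixed_of_mem (g : K ≃ₐ[F] K) {z : K}
    (h : z ∈ IntermediateField.fixedField (Subgroup.zpowers g)) : g z = z :=
  h ⟨g, Subgroup.mem_zpowers g⟩

theorem helper_eq_one (σ : K ≃ₐ[F] K) (S : Set K) (hS : IntermediateField.adjoin F S = ⊤)
    (h : ∀ s ∈ S, σ s = s) : σ = 1 := by
  ext z
  have hz : z ∈ IntermediateField.fixedField (Subgroup.zpowers σ) := by
    have hle : IntermediateField.adjoin F S ≤ IntermediateField.fixedField (Subgroup.zpowers σ) :=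
      IntermediateField.adjoin_le_iff.mpr (fun s hs => helper_mem_fixedField σ (h s hs))
    exact hle (by rw [hS]; trivial)
  exact helper_fixed_of_mem σ hz

theorem helper_fixedField_rank (g : K ≃ₐ[F] K) (h4 : g ^ 4 = 1) (h2 : g ^ 2 ≠ 1) :
    Module.finrank (IntermediateField.fixedField (Subgroup.zpowers g)) K = 4 := by
  classical
  have hfin : IsOfFinOrder g := isOfFinOrder_iff_pow_eq_one.mpr ⟨4, by norm_num, h4⟩
  haveI : Finite (Subgroup.zpowers g) := hfin.finite_zpowers
  haveI : Fintype (Subgroup.zpowers g) := Fintype.ofFinite _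
  have hcard : Fintype.card (Subgroup.zpowers g) = orderOf g := by
    rw [← Nat.card_eq_fintype_card]; exact Nat.card_zpowers g
  have horder : orderOf g = 4 := by
    have hd : orderOf g ∣ 4 := orderOf_dvd_of_pow_eq_one h4
    have hnd : ¬ orderOf g ∣ 2 := fun hh => h2 (orderOf_dvd_iff_pow_eq_one.mp hh)
    have h1 : 1 ≤ orderOf g := hfin.orderOf_pos
    have hle4 : orderOf g ≤ 4 := Nat.le_of_dvd (by norm_num) hd
    interval_cases h : orderOf g <;> revert hd hnd <;> decide
  have hfc : Module.finrank (IntermediateField.fixedField (Subgroup.zpowers g)) K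
      = Fintype.card (Subgroup.zpowers g) := FixedPoints.finrank_eq_card (Subgroup.zpowers g) K
  rw [hfc, hcard, horder]

end FieldHelpers

set_option synthInstance.maxHeartbeats 1000000 in
theorem xv_adjoin_top : IntermediateField.adjoin k (Set.range (xv k)) = ⊤ := by
  rw [eq_top_iff]
  rintro z -
  have hR : ∀ r : UenoRing k, algebraMap (UenoRing k) (UenoField k) r
      ∈ IntermediateField.adjoin k (Set.range (xv k)) := by
    intro r
    obtain ⟨p, rfl⟩ := Ideal.Quotient.mk_surjective r
    have h2 := MvPolynomial.aeval_unique
      ((IsScalarTower.toAlgHom k (UenoRing k) (UenoField k)).comp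
        (Ideal.Quotient.mkₐ k (uenoIdeal k)))
    have h1 : (⇑((IsScalarTower.toAlgHom k (UenoRing k) (UenoField k)).comp
        (Ideal.Quotient.mkₐ k (uenoIdeal k))) ∘ X) = xv k := by
      funext i; rfl
    rw [h1] at h2
    have hphi : algebraMap (UenoRing k) (UenoField k) (Ideal.Quotient.mk (uenoIdeal k) p)
        = MvPolynomial.aeval (xv k) p := DFunLike.congr_fun h2 p
    rw [hphi]
    have hmem : MvPolynomial.aeval (xv k) p ∈ Algebra.adjoin k (Set.range (xv k)) := by
      rw [Algebra.adjoin_range_eq_range_aeval]; exact ⟨p, rfl⟩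
    exact IntermediateField.algebra_adjoin_le_adjoin k _ hmem
  obtain ⟨a, b, -, rfl⟩ := IsFractionRing.div_surjective (A := UenoRing k) z
  exact div_mem (hR a) (hR b)

set_option maxHeartbeats 4000000 in
set_option synthInstance.maxHeartbeats 1000000 in
theorem ueno_main (h2 : (2 : k) ≠ 0) (ζ : k) (hζ : ζ ^ 2 = -1)
    (hne : ∀ i : Fin 6, xv k i ≠ 0)
    (g : UenoField k ≃ₐ[k] UenoField k)
    (hgx1 : g (x1 k) = -x1 k) (hgx2 : g (x2 k) = -x2 k) (hgx3 : g (x3 k) = -x3 k)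
    (hgy1 : g (y1 k) = algebraMap k (UenoField k) ζ * y1 k)
    (hgy2 : g (y2 k) = algebraMap k (UenoField k) ζ * y2 k)
    (hgy3 : g (y3 k) = algebraMap k (UenoField k) ζ * y3 k) :
    ∀ f : UenoField k,
      g f = f ↔
        f ∈ IntermediateField.adjoin k
          ({b2 k, b3 k, a2 k, a3 k, x1 k ^ 2, y1 k ^ 4, x1 k * y1 k ^ 2} :
            Set (UenoField k)) := by
  classical
  have hx1 : x1 k ≠ 0 := hne 0
  have hy1 : y1 k ≠ 0 := hne 1
  have hζ0 : ζ ≠ 0 := by intro h; rw [h] at hζ; norm_num at hζ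
  have hζK : algebraMap k (UenoField k) ζ ≠ 0 := by
    simpa using hζ0
  have hc2 : (algebraMap k (UenoField k) ζ) ^ 2 = -1 := by
    rw [← map_pow, hζ, map_neg, map_one]
  have hgc : g (algebraMap k (UenoField k) ζ) = algebraMap k (UenoField k) ζ := g.commutes ζ
  -- generators of L are fixed by g
  have hb2 : g (b2 k) = b2 k := by rw [b2, map_div₀, hgx2, hgx1]; ring
  have hb3 : g (b3 k) = b3 k := by rw [b3, map_div₀, hgx3, hgx1]; ring
  have ha2 : g (a2 k) = a2 k := by rw [a2, map_div₀, hgy2, hgy1, mul_div_mul_left _ _ hζK]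
  have ha3 : g (a3 k) = a3 k := by rw [a3, map_div₀, hgy3, hgy1, mul_div_mul_left _ _ hζK]
  have hu : g (x1 k ^ 2) = x1 k ^ 2 := by rw [map_pow, hgx1]; ring
  have hw : g (y1 k ^ 4) = y1 k ^ 4 := by
    have h4 : (algebraMap k (UenoField k) ζ) ^ 4 = 1 := by
      rw [show (4 : ℕ) = 2 * 2 from rfl, pow_mul, hc2]; ring
    rw [map_pow, hgy1, mul_pow, h4, one_mul]
  have hlam : g (x1 k * y1 k ^ 2) = x1 k * y1 k ^ 2 := by
    rw [map_mul, map_pow, hgx1, hgy1, mul_pow, hc2]; ring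
  set L := IntermediateField.adjoin k
      ({b2 k, b3 k, a2 k, a3 k, x1 k ^ 2, y1 k ^ 4, x1 k * y1 k ^ 2} :
        Set (UenoField k)) with hLdef
  have hle : L ≤ IntermediateField.fixedField (Subgroup.zpowers g) := by
    rw [hLdef, IntermediateField.adjoin_le_iff]
    rintro s hs
    simp only [Set.mem_insert_iff, Set.mem_singleton_iff] at hs
    rcases hs with rfl | rfl | rfl | rfl | rfl | rfl | rfl
    exacts [helper_mem_fixedField g hb2, helper_mem_fixedField g hb3,
      helper_mem_fixedField g ha2, helper_mem_fixedField g ha3,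
      helper_mem_fixedField g hu, helper_mem_fixedField g hw, helper_mem_fixedField g hlam]
  -- g has order 4
  have hgg : ∀ z : UenoField k, g z = algebraMap k (UenoField k) ζ * z → g (g z) = -z := by
    intro z hz
    rw [hz, map_mul, hgc, hz, ← mul_assoc, ← sq, hc2]; ring
  have hg4 : g ^ 4 = 1 := by
    apply helper_eq_one (g ^ 4) (Set.range (xv k)) (xv_adjoin_top k)
    rintro s ⟨i, rfl⟩
    have hp : (g ^ 4) (xv k i) = g (g (g (g (xv k i)))) := by
      rw [show (4 : ℕ) = 3 + 1 from rfl, pow_succ, AlgEquiv.mul_apply,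
        show (3 : ℕ) = 2 + 1 from rfl, pow_succ, AlgEquiv.mul_apply, sq, AlgEquiv.mul_apply]
    rw [hp]
    have hx : ∀ z : UenoField k, g z = -z → g (g (g (g z))) = z := by
      intro z hz; rw [hz, map_neg, hz, neg_neg, hz, map_neg, hz, neg_neg]
    have hy : ∀ z : UenoField k, g z = algebraMap k (UenoField k) ζ * z →
        g (g (g (g z))) = z := by
      intro z hz
      rw [hgg z hz, map_neg, map_neg, hgg z hz, neg_neg]
    fin_cases i
    exacts [hx (x1 k) hgx1, hy (y1 k) hgy1, hx (x2 k) hgx2, hy (y2 k) hgy2,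
      hx (x3 k) hgx3, hy (y3 k) hgy3]
  have hg2 : g ^ 2 ≠ 1 := by
    intro hcon
    have h1 : (g ^ 2) (y1 k) = y1 k := by rw [hcon]; rfl
    rw [sq, AlgEquiv.mul_apply, hgg (y1 k) hgy1] at h1
    have h2K : (2 : UenoField k) ≠ 0 := by
      intro hc
      apply h2
      apply (algebraMap k (UenoField k)).injective
      rw [map_ofNat, map_zero, hc]
    have h2y : (2 : UenoField k) * y1 k = 0 := by linear_combination -h1
    rcases mul_eq_zero.mp h2y with h | h
    · exact h2K h
    · exact hy1 h
  -- L-membership of the generators of L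
  have hb2L : b2 k ∈ L := IntermediateField.subset_adjoin _ _ (by simp)
  have hb3L : b3 k ∈ L := IntermediateField.subset_adjoin _ _ (by simp)
  have ha2L : a2 k ∈ L := IntermediateField.subset_adjoin _ _ (by simp)
  have ha3L : a3 k ∈ L := IntermediateField.subset_adjoin _ _ (by simp)
  have hwL : y1 k ^ 4 ∈ L := IntermediateField.subset_adjoin _ _ (by simp)
  have hlamL : x1 k * y1 k ^ 2 ∈ L := IntermediateField.subset_adjoin _ _ (by simp)
  -- y1 is integral of degree ≤ 4 over L
  set pmin : Polynomial ↥L := Polynomial.X ^ 4 - Polynomial.C (⟨y1 k ^ 4, hwL⟩ : ↥L)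
    with hpmin
  have hmonic : pmin.Monic := Polynomial.monic_X_pow_sub_C _ (by norm_num)
  have heval : Polynomial.aeval (y1 k) pmin = 0 := by
    rw [hpmin, map_sub, map_pow, Polynomial.aeval_X, Polynomial.aeval_C]
    rw [IntermediateField.algebraMap_apply]
    simp
  have hint : IsIntegral ↥L (y1 k) := ⟨pmin, hmonic, by
    rw [← Polynomial.aeval_def]; exact heval⟩
  haveI hFD : FiniteDimensional ↥L (IntermediateField.adjoin ↥L {y1 k}) :=
    IntermediateField.adjoin.finiteDimensional hint
  -- K = L(y1)
  have hEtop : IntermediateField.adjoin ↥L {y1 k} = ⊤ := by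
    rw [eq_top_iff]
    rintro z -
    have hy1E : y1 k ∈ IntermediateField.adjoin ↥L {y1 k} :=
      IntermediateField.subset_adjoin _ _ rfl
    have hLE : ∀ w : UenoField k, w ∈ L → w ∈ IntermediateField.adjoin ↥L {y1 k} := by
      intro w hw
      exact (IntermediateField.adjoin ↥L {y1 k}).algebraMap_mem ⟨w, hw⟩
    have hx1E : x1 k ∈ IntermediateField.adjoin ↥L {y1 k} := by
      have hrep : x1 k = (x1 k * y1 k ^ 2) * (y1 k ^ 2)⁻¹ := by field_simp
      rw [hrep]; exact mul_mem (hLE _ hlamL) (inv_mem (pow_mem hy1E 2))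
    have hx2E : x2 k ∈ IntermediateField.adjoin ↥L {y1 k} := by
      have hrep : x2 k = b2 k * x1 k := by rw [b2, div_mul_cancel₀ _ hx1]
      rw [hrep]; exact mul_mem (hLE _ hb2L) hx1E
    have hx3E : x3 k ∈ IntermediateField.adjoin ↥L {y1 k} := by
      have hrep : x3 k = b3 k * x1 k := by rw [b3, div_mul_cancel₀ _ hx1]
      rw [hrep]; exact mul_mem (hLE _ hb3L) hx1E
    have hy2E : y2 k ∈ IntermediateField.adjoin ↥L {y1 k} := by
      have hrep : y2 k = a2 k * y1 k := by rw [a2, div_mul_cancel₀ _ hy1]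
      rw [hrep]; exact mul_mem (hLE _ ha2L) hy1E
    have hy3E : y3 k ∈ IntermediateField.adjoin ↥L {y1 k} := by
      have hrep : y3 k = a3 k * y1 k := by rw [a3, div_mul_cancel₀ _ hy1]
      rw [hrep]; exact mul_mem (hLE _ ha3L) hy1E
    have hsub : IntermediateField.adjoin k (Set.range (xv k)) ≤
        (IntermediateField.adjoin ↥L {y1 k}).restrictScalars k := by
      rw [IntermediateField.adjoin_le_iff]
      rintro s ⟨i, rfl⟩
      fin_cases i
      exacts [hx1E, hy1E, hx2E, hy2E, hx3E, hy3E]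
    exact hsub (by rw [xv_adjoin_top k]; trivial)
  haveI hFDtop : FiniteDimensional ↥L (UenoField k) := by
    rw [hEtop] at hFD
    exact (IntermediateField.topEquiv (F := ↥L) (E := UenoField k)).toLinearEquiv.finiteDimensional
  have hfr : Module.finrank ↥L (UenoField k) ≤ 4 := by
    have he : Module.finrank ↥L (⊤ : IntermediateField ↥L (UenoField k))
        = Module.finrank ↥L (UenoField k) :=
      (IntermediateField.topEquiv (F := ↥L) (E := UenoField k)).toLinearEquiv.finrank_eq
    have hd : Module.finrank ↥L (IntermediateField.adjoin ↥L {y1 k})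
        = (minpoly ↥L (y1 k)).natDegree := IntermediateField.adjoin.finrank hint
    have hdeg : (minpoly ↥L (y1 k)).natDegree ≤ 4 := by
      have hne0 : pmin ≠ 0 := hmonic.ne_zero
      have hdle := minpoly.degree_le_of_ne_zero ↥L (y1 k) hne0 heval
      have hdp : pmin.degree = 4 := Polynomial.degree_X_pow_sub_C (by norm_num) _
      rw [hdp] at hdle
      exact Polynomial.natDegree_le_iff_degree_le.mpr hdle
    rw [hEtop, he] at hd
    rw [hd]; exact hdeg
  have hArtin : Module.finrank ↥(IntermediateField.fixedField (Subgroup.zpowers g))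
      (UenoField k) = 4 := helper_fixedField_rank g hg4 hg2
  have hEq : L = IntermediateField.fixedField (Subgroup.zpowers g) :=
    IntermediateField.eq_of_le_of_finrank_le' hle (by rw [hArtin]; exact hfr)
  intro f
  constructor
  · intro hf
    have hmem := helper_mem_fixedField g hf
    rw [hEq]
    exact hmem
  · intro hf
    exact helper_fixed_of_mem g (hle hf)


set_option synthInstance.maxHeartbeats 1000000 in
/-- **Lemma 2.1**: let `g` be the `k`-automorphism of `K = k(Z)` with `g(xᵢ) = -xᵢ`,
`g(yᵢ) = ζyᵢ` (`ζ² = -1`).  Then the fixed field `K^g` equals the subfield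
`L = k(b₂, b₃, a₂, a₃, u₁, w₁, λ₁)` generated over `k` by `b₂ = x₂/x₁`, `b₃ = x₃/x₁`,
`a₂ = y₂/y₁`, `a₃ = y₃/y₁`, `u₁ = x₁²`, `w₁ = y₁⁴`, `λ₁ = x₁y₁²`. -/
theorem fixed_field_eq_L (h2 : (2 : k) ≠ 0) (ζ : k) (hζ : ζ ^ 2 = -1)
    (hne : ∀ i : Fin 6, xv k i ≠ 0)
    (g : UenoField k ≃ₐ[k] UenoField k)
    (hgx1 : g (x1 k) = -x1 k) (hgx2 : g (x2 k) = -x2 k) (hgx3 : g (x3 k) = -x3 k)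
    (hgy1 : g (y1 k) = algebraMap k (UenoField k) ζ * y1 k)
    (hgy2 : g (y2 k) = algebraMap k (UenoField k) ζ * y2 k)
    (hgy3 : g (y3 k) = algebraMap k (UenoField k) ζ * y3 k) :
    ∀ f : UenoField k,
      g f = f ↔
        f ∈ IntermediateField.adjoin k
          ({b2 k, b3 k, a2 k, a3 k, x1 k ^ 2, y1 k ^ 4, x1 k * y1 k ^ 2} :
            Set (UenoField k)) := by
  exact ueno_main k h2 ζ hζ hne g hgx1 hgx2 hgx3 hgy1 hgy2 hgy3
end
end

section
/- Let k be a field of characteristic ≠ 2. Let R = k[x₁,y₁,x₂,y₂,x₃,y₃]/(yᵢ² − xᵢ(xᵢ²−1), i = 1,2,3), an integral domain, let K = Frac(R), and assume the images of all xᵢ, yᵢ are nonzero in K. Set bⱼ = xⱼ/x₁ and aⱼ = yⱼ/y₁ for j = 2,3. Then for each j ∈ {2,3}, one has aⱼ² − bⱼ ≠ 0 in K. -/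
open MvPolynomial

set_option maxHeartbeats 1000000
set_option synthInstance.maxHeartbeats 200000

noncomputable section

variable (k : Type*) [Field k] [(uenoIdeal k).IsPrime]

/-- The composite ring map `k[x⃗,y⃗] → R → K`. -/
def uenoMap : MvPolynomial (Fin 6) k →+* UenoField k :=
  (algebraMap (UenoRing k) (UenoField k)).comp
    (Ideal.Quotient.mk (uenoIdeal k))

lemma uenoMap_X (i : Fin 6) : uenoMap k (X i) = xv k i := rfl

/-- The evaluation point `(0,0,-1,0,-1,0)`, which kills all three relations. -/
def uenoPt : Fin 6 → k := ![0, 0, -1, 0, -1, 0]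

lemma uenoIdeal_le_ker : uenoIdeal k ≤ RingHom.ker (eval (uenoPt k)) := by
  rw [uenoIdeal, Ideal.span_le]
  intro f hf
  simp only [Set.mem_insert_iff, Set.mem_singleton_iff] at hf
  rcases hf with rfl | rfl | rfl <;>
  · show eval (uenoPt k) _ = 0
    simp only [map_sub, map_mul, map_pow, map_one, eval_X,
      show uenoPt k 0 = 0 from rfl, show uenoPt k 1 = 0 from rfl,
      show uenoPt k 2 = -1 from rfl, show uenoPt k 3 = 0 from rfl,
      show uenoPt k 4 = -1 from rfl, show uenoPt k 5 = 0 from rfl]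
    ring

lemma image_ne_zero (f : MvPolynomial (Fin 6) k) (h : eval (uenoPt k) f ≠ 0) :
    uenoMap k f ≠ 0 := by
  show algebraMap (UenoRing k) (UenoField k) (Ideal.Quotient.mk (uenoIdeal k) f) ≠ 0
  rw [Ne, IsFractionRing.to_map_eq_zero_iff, Ideal.Quotient.eq_zero_iff_mem]
  exact fun hf => h (uenoIdeal_le_ker k hf)

lemma xv_rel (i j : Fin 6)
    (hmem : X j ^ 2 - X i * (X i ^ 2 - 1) ∈ uenoIdeal k) :
    xv k j ^ 2 = xv k i * (xv k i ^ 2 - 1) := by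
  have h0 : uenoMap k (X j ^ 2 - X i * (X i ^ 2 - 1)) = 0 := by
    show algebraMap (UenoRing k) (UenoField k)
      (Ideal.Quotient.mk (uenoIdeal k) (X j ^ 2 - X i * (X i ^ 2 - 1))) = 0
    rw [Ideal.Quotient.eq_zero_iff_mem.2 hmem, map_zero]
  simp only [map_sub, map_mul, map_pow, map_one, uenoMap_X, sub_eq_zero] at h0
  exact h0

/-- **Lemma 2.3**: in `K = k(Z)`, `aⱼ² - bⱼ ≠ 0` for `j = 2, 3`. -/
theorem a_sq_sub_b_ne_zero (h2 : (2 : k) ≠ 0)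
    (hne : ∀ i : Fin 6, xv k i ≠ 0) :
    a2 k ^ 2 - b2 k ≠ 0 ∧ a3 k ^ 2 - b3 k ≠ 0 := by
  have hx1 : x1 k ≠ 0 := hne 0
  have hx2 : x2 k ≠ 0 := hne 2
  have hx3 : x3 k ≠ 0 := hne 4
  have hden : x1 k ^ 2 - 1 ≠ 0 := by
    have h := image_ne_zero k (X 0 ^ 2 - 1) (by
      simp only [map_sub, map_pow, map_one, eval_X, show uenoPt k 0 = 0 from rfl]
      norm_num)
    simp only [map_sub, map_pow, map_one, uenoMap_X] at h
    exact h
  have hd2 : x2 k ^ 2 - x1 k ^ 2 ≠ 0 := by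
    have h := image_ne_zero k (X 2 ^ 2 - X 0 ^ 2) (by
      simp only [map_sub, map_pow, eval_X, show uenoPt k 0 = 0 from rfl,
        show uenoPt k 2 = -1 from rfl]
      norm_num)
    simp only [map_sub, map_pow, uenoMap_X] at h
    exact h
  have hd3 : x3 k ^ 2 - x1 k ^ 2 ≠ 0 := by
    have h := image_ne_zero k (X 4 ^ 2 - X 0 ^ 2) (by
      simp only [map_sub, map_pow, eval_X, show uenoPt k 0 = 0 from rfl,
        show uenoPt k 4 = -1 from rfl]
      norm_num)
    simp only [map_sub, map_pow, uenoMap_X] at h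
    exact h
  have rel1 : y1 k ^ 2 = x1 k * (x1 k ^ 2 - 1) :=
    xv_rel k 0 1 (Ideal.subset_span (by simp))
  have rel2 : y2 k ^ 2 = x2 k * (x2 k ^ 2 - 1) :=
    xv_rel k 2 3 (Ideal.subset_span (by simp))
  have rel3 : y3 k ^ 2 = x3 k * (x3 k ^ 2 - 1) :=
    xv_rel k 4 5 (Ideal.subset_span (by simp))
  constructor
  · have e : a2 k ^ 2 - b2 k
        = x2 k * (x2 k ^ 2 - x1 k ^ 2) / (x1 k * (x1 k ^ 2 - 1)) := by
      rw [a2, b2, div_pow, rel1, rel2]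
      field_simp
      ring
    rw [e]
    exact div_ne_zero (mul_ne_zero hx2 hd2) (mul_ne_zero hx1 hden)
  · have e : a3 k ^ 2 - b3 k
        = x3 k * (x3 k ^ 2 - x1 k ^ 2) / (x1 k * (x1 k ^ 2 - 1)) := by
      rw [a3, b3, div_pow, rel1, rel3]
      field_simp
      ring
    rw [e]
    exact div_ne_zero (mul_ne_zero hx3 hd3) (mul_ne_zero hx1 hden)
end
end

section
/- Let k be a field of characteristic ≠ 2. Let R = k[x₁,y₁,x₂,y₂,x₃,y₃]/(yᵢ² − xᵢ(xᵢ²−1), i = 1,2,3), an integral domain, let K = Frac(R), and assume the images of all xᵢ, yᵢ are nonzero in K. Set bⱼ = xⱼ/x₁, aⱼ = yⱼ/y₁ for j = 2,3. Then the relation (a₂² − b₂)(a₃² − b₃³) = (a₃² − b₃)(a₂² − b₂³) holds in K, or equivalently a₂²·b₃·(1 − b₃²) = a₃²·b₂·(1 − b₂²) + b₂·b₃·(b₂² − b₃²). -/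
open MvPolynomial

noncomputable section

variable (k : Type*) [Field k] [(uenoIdeal k).IsPrime]

set_option synthInstance.maxHeartbeats 1000000 in
set_option maxHeartbeats 2000000 in
/-- **Relations (XII) and (XIII)** in the proof of Proposition 2.5: in `K = k(Z)`,
`(a₂² - b₂)(a₃² - b₃³) = (a₃² - b₃)(a₂² - b₂³)`, equivalently
`a₂²b₃(1 - b₃²) = a₃²b₂(1 - b₂²) + b₂b₃(b₂² - b₃²)`. -/
theorem hypersurface_relation (h2 : (2 : k) ≠ 0) (hne : ∀ i : Fin 6, xv k i ≠ 0) :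
    (a2 k ^ 2 - b2 k) * (a3 k ^ 2 - b3 k ^ 3) =
      (a3 k ^ 2 - b3 k) * (a2 k ^ 2 - b2 k ^ 3) ∧
    a2 k ^ 2 * b3 k * (1 - b3 k ^ 2) =
      a3 k ^ 2 * b2 k * (1 - b2 k ^ 2) + b2 k * b3 k * (b2 k ^ 2 - b3 k ^ 2) := by
  have gen_zero : ∀ p : MvPolynomial (Fin 6) k, p ∈ uenoIdeal k →
      algebraMap (UenoRing k) (UenoField k) (Ideal.Quotient.mk (uenoIdeal k) p) = 0 := by
    intro p hp
    rw [Ideal.Quotient.eq_zero_iff_mem.2 hp, map_zero]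
  have key : ∀ p q : Fin 6,
      (X q ^ 2 - X p * (X p ^ 2 - 1) : MvPolynomial (Fin 6) k) ∈ uenoIdeal k →
      xv k q ^ 2 = xv k p ^ 3 - xv k p := by
    intro p q hm
    have h0 := gen_zero _ hm
    simp only [map_sub, map_mul, map_pow, map_one, sub_eq_zero] at h0
    rw [show xv k q = algebraMap (UenoRing k) (UenoField k)
      (Ideal.Quotient.mk (uenoIdeal k) (X q)) from rfl,
      show xv k p = algebraMap (UenoRing k) (UenoField k)
      (Ideal.Quotient.mk (uenoIdeal k) (X p)) from rfl, h0]
    ring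
  have h1 : y1 k ^ 2 = x1 k ^ 3 - x1 k :=
    key 0 1 (Ideal.subset_span (Set.mem_insert _ _))
  have hz2 : y2 k ^ 2 = x2 k ^ 3 - x2 k :=
    key 2 3 (Ideal.subset_span (by simp))
  have hz3 : y3 k ^ 2 = x3 k ^ 3 - x3 k :=
    key 4 5 (Ideal.subset_span (by simp))
  have hx1 : x1 k ≠ 0 := hne 0
  have hy1 : y1 k ≠ 0 := hne 1
  have hd : x1 k ^ 3 - x1 k ≠ 0 := h1 ▸ pow_ne_zero 2 hy1
  have ha2 : a2 k ^ 2 = (x2 k ^ 3 - x2 k) / (x1 k ^ 3 - x1 k) := by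
    rw [a2, div_pow, hz2, h1]
  have ha3 : a3 k ^ 2 = (x3 k ^ 3 - x3 k) / (x1 k ^ 3 - x1 k) := by
    rw [a3, div_pow, hz3, h1]
  have hd2 : x1 k ^ 2 - 1 ≠ 0 := fun h => hd (by rw [show x1 k ^ 3 - x1 k = x1 k * (x1 k ^ 2 - 1) by ring, h, mul_zero])
  constructor <;>
  · rw [ha2, ha3, b2, b3]
    field_simp
    ring
end
end

section
/- Let k be a field of characteristic ≠ 2. Let R = k[x₁,y₁,x₂,y₂,x₃,y₃]/(yᵢ² − xᵢ(xᵢ²−1), i = 1,2,3), an integral domain, let K = Frac(R), and assume the images of all xᵢ, yᵢ are nonzero in K. Set b₂ = x₂/x₁, b₃ = x₃/x₁, a₃ = y₃/y₁. Then the three elements a₃, b₂, b₃ of K are algebraically independent over k. -/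
open MvPolynomial

noncomputable section
set_option maxHeartbeats 2000000
set_option synthInstance.maxHeartbeats 2000000

namespace UenoAux
variable (k : Type*) [Field k]

abbrev F0 : Type _ := FractionRing (MvPolynomial (Fin 3) k)
def u0 : F0 k := algebraMap (MvPolynomial (Fin 3) k) (F0 k) (X 0)
def v0 : F0 k := algebraMap (MvPolynomial (Fin 3) k) (F0 k) (X 1)
def w0 : F0 k := algebraMap (MvPolynomial (Fin 3) k) (F0 k) (X 2)

lemma hA : v0 k ^ 3 - w0 k ^ 2 ≠ 0 := by
  have h : (X 1 ^ 3 - X 2 ^ 2 : MvPolynomial (Fin 3) k) ≠ 0 := by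
    intro h
    have := congrArg (coeff (Finsupp.single 1 3)) h
    simp [coeff_X_pow, Finsupp.single_eq_single_iff] at this
  intro h0
  apply h
  apply IsFractionRing.injective (MvPolynomial (Fin 3) k) (F0 k)
  rw [map_sub, map_pow, map_pow, map_zero]
  exact h0

lemma hB : v0 k - w0 k ^ 2 ≠ 0 := by
  have h : (X 1 - X 2 ^ 2 : MvPolynomial (Fin 3) k) ≠ 0 := by
    intro h
    have := congrArg (coeff (Finsupp.single 1 1)) h
    simp [coeff_X_pow, coeff_X, Finsupp.single_eq_single_iff] at this
  intro h0
  apply h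
  apply IsFractionRing.injective (MvPolynomial (Fin 3) k) (F0 k)
  rw [map_sub, map_pow, map_zero]
  exact h0

lemma hC : v0 k - v0 k ^ 3 ≠ 0 := by
  have h : (X 1 - X 1 ^ 3 : MvPolynomial (Fin 3) k) ≠ 0 := by
    intro h
    have := congrArg (coeff (Finsupp.single 1 1)) h
    simp [coeff_X_pow, coeff_X, Finsupp.single_eq_single_iff] at this
  intro h0
  apply h
  apply IsFractionRing.injective (MvPolynomial (Fin 3) k) (F0 k)
  rw [map_sub, map_pow, map_zero]
  exact h0

def d1 : F0 k := (v0 k - w0 k ^ 2) / (v0 k ^ 3 - w0 k ^ 2)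

lemma d1_ne : d1 k ≠ 0 := div_ne_zero (hB k) (hA k)
lemma d1_mul : d1 k * (v0 k ^ 3 - w0 k ^ 2) = v0 k - w0 k ^ 2 := div_mul_cancel₀ _ (hA k)
lemma d1_sub_one_ne : d1 k - 1 ≠ 0 := by
  have h : v0 k - w0 k ^ 2 - (v0 k ^ 3 - w0 k ^ 2) = v0 k - v0 k ^ 3 := by ring
  have : d1 k - 1 = (v0 k - v0 k ^ 3) / (v0 k ^ 3 - w0 k ^ 2) := by
    rw [d1, div_sub_one (hA k), h]
  rw [this]
  exact div_ne_zero (hC k) (hA k)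

-- level 1
abbrev P1 : Polynomial (F0 k) := Polynomial.X ^ 2 - Polynomial.C (d1 k)
lemma P1monic : (P1 k).Monic := Polynomial.monic_X_pow_sub_C _ (by norm_num)
abbrev F1 : Type _ := AdjoinRoot (P1 k)
def o1 : F0 k →+* F1 k := AdjoinRoot.of _
def r1 : F1 k := AdjoinRoot.root _

lemma nontrivial_adjoinRoot {R : Type*} [CommRing R] [Nontrivial R] {g : Polynomial R}
    (hg : g.Monic) (h0 : 0 < g.natDegree) : Nontrivial (AdjoinRoot g) := by
  have b := (AdjoinRoot.powerBasis' hg).basis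
  refine ⟨b ⟨0, ?_⟩, 0, b.ne_zero _⟩
  rw [AdjoinRoot.powerBasis'_dim]
  exact h0

instance : Nontrivial (F1 k) :=
  nontrivial_adjoinRoot (P1monic k) (by rw [Polynomial.natDegree_X_pow_sub_C]; norm_num)

lemma r1_sq : r1 k ^ 2 = o1 k (d1 k) := by
  have := AdjoinRoot.eval₂_root (P1 k)
  simpa [sub_eq_zero, o1, r1] using this

lemma r1_unit : IsUnit (r1 k) := by
  apply isUnit_of_mul_isUnit_left (y := r1 k)
  rw [← sq, r1_sq]
  exact ((d1_ne k).isUnit).map (o1 k)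

def d2 : F1 k := r1 k ^ 3 - r1 k
lemma d2_eq : d2 k = r1 k * o1 k (d1 k - 1) := by
  rw [d2, map_sub, map_one, ← r1_sq]; ring
lemma d2_unit : IsUnit (d2 k) := by
  rw [d2_eq]
  exact (r1_unit k).mul (((d1_sub_one_ne k).isUnit).map (o1 k))


-- level 2
abbrev P2 : Polynomial (F1 k) := Polynomial.X ^ 2 - Polynomial.C (d2 k)
lemma P2monic : (P2 k).Monic := Polynomial.monic_X_pow_sub_C _ (by norm_num)
abbrev F2 : Type _ := AdjoinRoot (P2 k)
def o2 : F1 k →+* F2 k := AdjoinRoot.of _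
def r2 : F2 k := AdjoinRoot.root _

instance : Nontrivial (F2 k) :=
  nontrivial_adjoinRoot (P2monic k) (by rw [Polynomial.natDegree_X_pow_sub_C]; norm_num)

lemma r2_sq : r2 k ^ 2 = o2 k (d2 k) := by
  have := AdjoinRoot.eval₂_root (P2 k)
  simpa [sub_eq_zero, o2, r2] using this

lemma r2_unit : IsUnit (r2 k) := by
  apply isUnit_of_mul_isUnit_left (y := r2 k)
  rw [← sq, r2_sq]
  exact (d2_unit k).map (o2 k)

-- level 3
def u2 : F2 k := o2 k (o1 k (u0 k))
def d3 : F2 k := u2 k * o2 k (r1 k) * ((u2 k * o2 k (r1 k)) ^ 2 - 1)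
abbrev P3 : Polynomial (F2 k) := Polynomial.X ^ 2 - Polynomial.C (d3 k)
lemma P3monic : (P3 k).Monic := Polynomial.monic_X_pow_sub_C _ (by norm_num)
abbrev F3 : Type _ := AdjoinRoot (P3 k)
def o3 : F2 k →+* F3 k := AdjoinRoot.of _
def r3 : F3 k := AdjoinRoot.root _

instance : Nontrivial (F3 k) :=
  nontrivial_adjoinRoot (P3monic k) (by rw [Polynomial.natDegree_X_pow_sub_C]; norm_num)

lemma r3_sq : r3 k ^ 2 = o3 k (d3 k) := by
  have := AdjoinRoot.eval₂_root (P3 k)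
  simpa [sub_eq_zero, o3, r3] using this

/-- the full ring hom `F0 → F3` -/
def oT : F0 k →+* F3 k := ((o3 k).comp (o2 k)).comp (o1 k)

lemma oT_injective : Function.Injective (oT k) := (oT k).injective

-- names in F3
def uF : F3 k := oT k (u0 k)
def vF : F3 k := oT k (v0 k)
def wF : F3 k := oT k (w0 k)
def r1F : F3 k := o3 k (o2 k (r1 k))
def r2F : F3 k := o3 k (r2 k)

lemma r1F_sq : r1F k ^ 2 = oT k (d1 k) := by
  rw [r1F, oT, ← map_pow, ← map_pow, r1_sq]; rfl
lemma r2F_sq : r2F k ^ 2 = r1F k ^ 3 - r1F k := by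
  rw [r2F, ← map_pow, r2_sq, r1F]
  rw [show (d2 k) = r1 k ^ 3 - r1 k from rfl]
  push_cast [map_sub, map_pow]
  ring
lemma r3_sq' : r3 k ^ 2 = uF k * r1F k * ((uF k * r1F k) ^ 2 - 1) := by
  rw [r3_sq, show (d3 k) = u2 k * o2 k (r1 k) * ((u2 k * o2 k (r1 k)) ^ 2 - 1) from rfl]
  simp only [map_mul, map_sub, map_pow, map_one]
  rfl

lemma r1F_unit : IsUnit (r1F k) := ((r1_unit k).map (o2 k)).map (o3 k)
lemma r2F_unit : IsUnit (r2F k) := (r2_unit k).map (o3 k)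


lemma key_pow {L : Type*} [CommRing L] (w r2 u v r1 : L) {a b c N : ℕ}
    (h1 : a ≤ N) (h2 : b + c ≤ 2 * N) :
    (w * r2) ^ a * (r2 ^ (N - a) * ((u * r1) ^ b * ((v * r1) ^ c * r1 ^ (2 * N - (b + c))))) =
      w ^ a * u ^ b * v ^ c * (r2 ^ N * r1 ^ (2 * N)) := by
  have e1 : r2 ^ a * r2 ^ (N - a) = r2 ^ N := by rw [← pow_add]; congr 1; omega
  have e2 : r1 ^ b * r1 ^ c * r1 ^ (2 * N - (b + c)) = r1 ^ (2 * N) := by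
    rw [← pow_add, ← pow_add]; congr 1; omega
  calc (w * r2) ^ a * (r2 ^ (N - a) * ((u * r1) ^ b * ((v * r1) ^ c * r1 ^ (2 * N - (b + c)))))
      = w ^ a * u ^ b * v ^ c *
        ((r2 ^ a * r2 ^ (N - a)) * (r1 ^ b * r1 ^ c * r1 ^ (2 * N - (b + c)))) := by
        rw [mul_pow, mul_pow, mul_pow]; ring
    _ = w ^ a * u ^ b * v ^ c * (r2 ^ N * r1 ^ (2 * N)) := by rw [e1, e2]

lemma key_frac {L : Type*} [Field L] {Y1 X1 : L} (hy1 : Y1 ≠ 0) (hx1 : X1 ≠ 0)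
    (Y3 X2 X3 : L) {a b c N : ℕ} (h1 : a ≤ N) (h2 : b + c ≤ 2 * N) :
    Y3 ^ a * (Y1 ^ (N - a) * (X2 ^ b * (X3 ^ c * X1 ^ (2 * N - (b + c))))) =
      (Y3 / Y1) ^ a * (X2 / X1) ^ b * (X3 / X1) ^ c * (Y1 ^ N * X1 ^ (2 * N)) := by
  have e1 : Y1 ^ N = Y1 ^ a * Y1 ^ (N - a) := by rw [← pow_add]; congr 1; omega
  have e2 : X1 ^ (2 * N) = X1 ^ b * X1 ^ c * X1 ^ (2 * N - (b + c)) := by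
    rw [← pow_add, ← pow_add]; congr 1; omega
  rw [e1, e2, div_pow, div_pow, div_pow]
  have hy : Y1 ^ a ≠ 0 := pow_ne_zero _ hy1
  have hxb : X1 ^ b ≠ 0 := pow_ne_zero _ hx1
  have hxc : X1 ^ c ≠ 0 := pow_ne_zero _ hx1
  field_simp

end UenoAux


variable (k : Type*) [Field k] [(uenoIdeal k).IsPrime]

/-- In the function field `K = k(Z)` of `Z = C₁ × C₂ × C₃`, the three elements
`a₃ = y₃/y₁`, `b₂ = x₂/x₁`, `b₃ = x₃/x₁` are algebraically independent over `k`
(proof of Proposition 2.5). -/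
theorem algebraicIndependent_a3_b2_b3 (h2 : (2 : k) ≠ 0)
    (hne : ∀ i : Fin 6, xv k i ≠ 0) :
    AlgebraicIndependent k ![a3 k, b2 k, b3 k] := by
  classical
  rw [algebraicIndependent_iff]
  intro p hp
  have hy1 : y1 k ≠ 0 := hne 1
  have hx1 : x1 k ≠ 0 := hne 0
  set N := p.totalDegree with hN
  -- bound on exponents
  have hbound : ∀ m ∈ p.support, m 0 + (m 1 + m 2) ≤ N := by
    intro m hm
    have h1 := MvPolynomial.le_totalDegree hm
    have h2 : (m.sum fun _ e => e) = m 0 + m 1 + m 2 := by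
      rw [Finsupp.sum_fintype _ _ (fun _ => rfl), Fin.sum_univ_three]
    omega
  -- the polynomial q obtained from p by clearing denominators
  set q : MvPolynomial (Fin 6) k := ∑ m ∈ p.support,
    C (coeff m p) * (X 5 ^ m 0 * (X 1 ^ (N - m 0) *
      (X 2 ^ m 1 * (X 4 ^ m 2 * X 0 ^ (2 * N - (m 1 + m 2)))))) with hq
  set E : MvPolynomial (Fin 6) k →+* UenoField k :=
    (algebraMap (UenoRing k) (UenoField k)).comp (Ideal.Quotient.mk (uenoIdeal k)) with hE
  have hEC : ∀ c : k, E (C c) = algebraMap k (UenoField k) c := fun c => rfl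
  have hEX : ∀ i, E (X i) = xv k i := fun i => rfl
  -- step 1 : q lies in the ideal
  have hEq : E q = 0 := by
    have key : E q = (aeval ![a3 k, b2 k, b3 k] p) * (y1 k ^ N * x1 k ^ (2 * N)) := by
      rw [hq, map_sum, aeval_def, eval₂_eq', Finset.sum_mul]
      apply Finset.sum_congr rfl
      intro m hm
      have hb := hbound m hm
      rw [Fin.prod_univ_three]
      simp only [map_mul, map_pow, hEC, hEX]
      rw [show (![a3 k, b2 k, b3 k] : Fin 3 → UenoField k) 0 = a3 k from rfl,
        show (![a3 k, b2 k, b3 k] : Fin 3 → UenoField k) 1 = b2 k from rfl,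
        show (![a3 k, b2 k, b3 k] : Fin 3 → UenoField k) 2 = b3 k from rfl,
        show xv k 5 = y3 k from rfl, show xv k 1 = y1 k from rfl,
        show xv k 2 = x2 k from rfl, show xv k 4 = x3 k from rfl,
        show xv k 0 = x1 k from rfl, a3, b2, b3]
      have hfrac := UenoAux.key_frac hy1 hx1 (y3 k) (x2 k) (x3 k)
        (a := m 0) (b := m 1) (c := m 2) (N := N) (by omega) (by omega)
      rw [hfrac]
      ring
    rw [key, hp, zero_mul]
  have hq_mem : q ∈ uenoIdeal k := by
    rw [← Ideal.Quotient.eq_zero_iff_mem]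
    apply IsFractionRing.injective (UenoRing k) (UenoField k)
    rw [map_zero]
    exact hEq
  -- step 2 : evaluate at the generic point of the auxiliary tower
  set φk : k →+* UenoAux.F3 k :=
    (UenoAux.oT k).comp (algebraMap k (UenoAux.F0 k)) with hφk
  set pt : Fin 6 → UenoAux.F3 k :=
    ![UenoAux.r1F k, UenoAux.r2F k, UenoAux.uF k * UenoAux.r1F k, UenoAux.r3 k,
      UenoAux.vF k * UenoAux.r1F k, UenoAux.wF k * UenoAux.r2F k] with hpt
  set ev : MvPolynomial (Fin 6) k →+* UenoAux.F3 k := eval₂Hom φk pt with hev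
  have hptv : pt 0 = UenoAux.r1F k ∧ pt 1 = UenoAux.r2F k ∧ pt 2 = UenoAux.uF k * UenoAux.r1F k
      ∧ pt 3 = UenoAux.r3 k ∧ pt 4 = UenoAux.vF k * UenoAux.r1F k
      ∧ pt 5 = UenoAux.wF k * UenoAux.r2F k := ⟨rfl, rfl, rfl, rfl, rfl, rfl⟩
  obtain ⟨hp0, hp1, hp2, hp3, hp4, hp5⟩ := hptv
  have hker : uenoIdeal k ≤ RingHom.ker ev := by
    rw [uenoIdeal, Ideal.span_le]
    intro f hf
    simp only [Set.mem_insert_iff, Set.mem_singleton_iff] at hf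
    have hoT : (UenoAux.oT k) (UenoAux.d1 k) * (UenoAux.vF k ^ 3 - UenoAux.wF k ^ 2)
        = UenoAux.vF k - UenoAux.wF k ^ 2 := by
      have := congrArg (UenoAux.oT k) (UenoAux.d1_mul k)
      rw [map_mul, map_sub, map_sub, map_pow, map_pow] at this
      exact this
    rcases hf with rfl | rfl | rfl <;>
      simp only [SetLike.mem_coe, RingHom.mem_ker, map_sub, map_mul, map_pow, map_one, hev, eval₂Hom_X',
        hp0, hp1, hp2, hp3, hp4, hp5] <;>
      first
      | (rw [UenoAux.r2F_sq]; ring)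
      | (rw [UenoAux.r3_sq']; ring)
      | (linear_combination (UenoAux.wF k ^ 2) * UenoAux.r2F_sq k
          + (UenoAux.wF k ^ 2 * UenoAux.r1F k - UenoAux.vF k ^ 3 * UenoAux.r1F k) *
            UenoAux.r1F_sq k - UenoAux.r1F k * hoT)
  have hevq : ev q = 0 := hker hq_mem
  -- step 3 : compute ev q
  have hcomp : ev q = (eval₂ φk ![UenoAux.wF k, UenoAux.uF k, UenoAux.vF k] p)
      * (UenoAux.r2F k ^ N * UenoAux.r1F k ^ (2 * N)) := by
    rw [hq, map_sum, eval₂_eq', Finset.sum_mul]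
    apply Finset.sum_congr rfl
    intro m hm
    have hb := hbound m hm
    rw [Fin.prod_univ_three]
    simp only [map_mul, map_pow, hev, eval₂Hom_C, eval₂Hom_X', hp0, hp1, hp2, hp4, hp5]
    rw [show (![UenoAux.wF k, UenoAux.uF k, UenoAux.vF k] : Fin 3 → UenoAux.F3 k) 0
        = UenoAux.wF k from rfl,
      show (![UenoAux.wF k, UenoAux.uF k, UenoAux.vF k] : Fin 3 → UenoAux.F3 k) 1
        = UenoAux.uF k from rfl,
      show (![UenoAux.wF k, UenoAux.uF k, UenoAux.vF k] : Fin 3 → UenoAux.F3 k) 2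
        = UenoAux.vF k from rfl]
    have hpow := UenoAux.key_pow (UenoAux.wF k) (UenoAux.r2F k) (UenoAux.uF k) (UenoAux.vF k)
      (UenoAux.r1F k) (a := m 0) (b := m 1) (c := m 2) (N := N) (by omega) (by omega)
    rw [hpow]
    ring
  have hΨ : eval₂ φk ![UenoAux.wF k, UenoAux.uF k, UenoAux.vF k] p = 0 := by
    have hu : IsUnit (UenoAux.r2F k ^ N * UenoAux.r1F k ^ (2 * N)) :=
      ((UenoAux.r2F_unit k).pow N).mul ((UenoAux.r1F_unit k).pow (2 * N))
    apply hu.mul_right_cancel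
    rw [zero_mul, ← hcomp, hevq]
  -- step 4 : conclude p = 0
  have hg : Function.Injective (![2, 0, 1] : Fin 3 → Fin 3) := by decide
  have hcompΨ : (eval₂Hom φk ![UenoAux.wF k, UenoAux.uF k, UenoAux.vF k] :
      MvPolynomial (Fin 3) k →+* UenoAux.F3 k)
      = ((UenoAux.oT k).comp (algebraMap (MvPolynomial (Fin 3) k) (UenoAux.F0 k))).comp
          (rename (![2, 0, 1] : Fin 3 → Fin 3)).toRingHom := by
    apply ringHom_ext
    · intro c
      simp only [coe_eval₂Hom, eval₂_C, RingHom.coe_comp, Function.comp_apply,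
        AlgHom.toRingHom_eq_coe, RingHom.coe_coe, rename_C]
      rfl
    · intro i
      fin_cases i <;>
        simp only [coe_eval₂Hom, eval₂_X, RingHom.coe_comp, Function.comp_apply,
          AlgHom.toRingHom_eq_coe, RingHom.coe_coe, rename_X] <;> rfl
  have hinj : Function.Injective (eval₂Hom φk ![UenoAux.wF k, UenoAux.uF k, UenoAux.vF k] :
      MvPolynomial (Fin 3) k →+* UenoAux.F3 k) := by
    rw [hcompΨ]
    exact (((UenoAux.oT_injective k).comp
      (IsFractionRing.injective (MvPolynomial (Fin 3) k) (UenoAux.F0 k))).comp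
        (rename_injective _ hg))
  apply hinj
  rw [map_zero]
  exact hΨ
end
end

section
/- Let k be a field of characteristic ≠ 2. Let F = k(α, b, β) be the rational function field in three variables over k (the fraction field of the polynomial ring k[α,b,β]). Then the element (α²·b·(1−b²) + b·β·(b²−β²)) / (β·(1−β²)) of F is not a square in F, i.e., there is no f ∈ F with f² equal to this element. -/
open MvPolynomial

noncomputable section

/-- The rational function field `F = k(α, b, β)` in three variables over `k`,
with `α = X 0`, `b = X 1`, `β = X 2`. -/
abbrev RatFunc3 (k : Type*) [Field k] : Type _ := FractionRing (MvPolynomial (Fin 3) k)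

/-- The image of the `i`-th variable in `F = k(α, b, β)`. -/
def mv3 (k : Type*) [Field k] (i : Fin 3) : RatFunc3 k :=
  algebraMap (MvPolynomial (Fin 3) k) (RatFunc3 k) (X i)

/-- The variable `β = X 2` is prime in `k[α, b, β]`. -/
lemma primeX2 (k : Type*) [Field k] : Prime (X (2 : Fin 3) : MvPolynomial (Fin 3) k) := by
  have h0 : Prime (X (0 : Fin 3) : MvPolynomial (Fin 3) k) := by
    rw [(MulEquiv.prime_iff (finSuccEquiv k 2).toMulEquiv).symm]
    simpa [finSuccEquiv_X_zero] using Polynomial.prime_X (R := MvPolynomial (Fin 2) k)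
  have h := (MulEquiv.prime_iff (renameEquiv k (Equiv.swap (0 : Fin 3) 2)).toMulEquiv
    (p := (X (0 : Fin 3) : MvPolynomial (Fin 3) k))).symm
  rw [h] at h0
  simpa using h0

/-- The substitution `β ↦ 0` on `k[α, b, β]`. -/
def psi0 (k : Type*) [Field k] : MvPolynomial (Fin 3) k →ₐ[k] MvPolynomial (Fin 3) k :=
  aeval (fun i => if i = 2 then 0 else X i)

lemma not_X2_dvd_one_sub_sq (k : Type*) [Field k] :
    ¬ (X (2 : Fin 3) : MvPolynomial (Fin 3) k) ∣ 1 - X 2 ^ 2 := by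
  intro hd
  have h := map_dvd (psi0 k) hd
  simp only [psi0, map_sub, map_one, map_pow, aeval_X, if_pos rfl] at h
  simp at h

lemma not_X2_dvd_N (k : Type*) [Field k] :
    ¬ (X (2 : Fin 3) : MvPolynomial (Fin 3) k) ∣
      X 0 ^ 2 * X 1 * (1 - X 1 ^ 2) + X 1 * X 2 * (X 1 ^ 2 - X 2 ^ 2) := by
  intro hd
  have h := map_dvd (psi0 k) hd
  have e0 : (psi0 k) (X 2) = 0 := by simp [psi0]
  rw [e0, zero_dvd_iff] at h
  have h' : (X 0 : MvPolynomial (Fin 3) k) ^ 2 * X 1 * (1 - X 1 ^ 2) = 0 := by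
    simpa [psi0] using h
  rcases mul_eq_zero.mp h' with h'' | h''
  · rcases mul_eq_zero.mp h'' with h3 | h3
    · exact pow_ne_zero 2 (X_ne_zero _) h3
    · exact X_ne_zero _ h3
  · have := congrArg constantCoeff h''
    simp at this

set_option synthInstance.maxHeartbeats 1000000 in
/-- The element `(α²b(1-b²) + bβ(b²-β²)) / (β(1-β²))` of the rational function field
`F = k(α, b, β)` is not a square in `F` (claim in the proof of Proposition 2.5). -/
theorem rhs_not_a_square (k : Type*) [Field k] (h2 : (2 : k) ≠ 0) :
    ¬ ∃ f : RatFunc3 k,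
      f ^ 2 =
        (mv3 k 0 ^ 2 * mv3 k 1 * (1 - mv3 k 1 ^ 2) +
            mv3 k 1 * mv3 k 2 * (mv3 k 1 ^ 2 - mv3 k 2 ^ 2)) /
          (mv3 k 2 * (1 - mv3 k 2 ^ 2)) := by
  rintro ⟨f, hf⟩
  set R := MvPolynomial (Fin 3) k with hRdef
  set φ := algebraMap R (RatFunc3 k) with hφdef
  set N : R := X 0 ^ 2 * X 1 * (1 - X 1 ^ 2) + X 1 * X 2 * (X 1 ^ 2 - X 2 ^ 2) with hNdef
  set D : R := X 2 * (1 - X 2 ^ 2) with hDdef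
  have hprime : Prime (X (2 : Fin 3) : R) := primeX2 k
  have hone : ¬ (X (2 : Fin 3) : R) ∣ 1 - X 2 ^ 2 := not_X2_dvd_one_sub_sq k
  have hN : ¬ (X (2 : Fin 3) : R) ∣ N := not_X2_dvd_N k
  have hinj : Function.Injective φ := IsFractionRing.injective R (RatFunc3 k)
  have hsub : (1 - X 2 ^ 2 : R) ≠ 0 := by
    intro h
    have := congrArg constantCoeff h
    simp at this
  have hD0 : D ≠ 0 := mul_ne_zero (X_ne_zero _) hsub
  have hφD : φ D ≠ 0 := fun h => hD0 (hinj (by simpa using h))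
  set p : R := IsFractionRing.num R f with hpdef
  set q : nonZeroDivisors R := IsFractionRing.den R f with hqdef
  have hq0 : (q : R) ≠ 0 := nonZeroDivisors.coe_ne_zero q
  have hφq : φ (q : R) ≠ 0 := fun h => hq0 (hinj (by simpa using h))
  have hfeq : φ p / φ (q : R) = f := IsFractionRing.mk'_num_den' R f
  have hND : f ^ 2 = φ N / φ D := by
    rw [hf]
    congr 1 <;> simp [hNdef, hDdef, mv3, hφdef, map_add, map_mul, map_pow, map_sub, map_one] <;> rfl
  have hcross : φ p ^ 2 * φ D = φ N * φ (q : R) ^ 2 := by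
    rw [← hfeq, div_pow] at hND
    field_simp at hND
    linear_combination hND
  have key : p ^ 2 * D = N * (q : R) ^ 2 := by
    apply hinj
    simp only [map_mul, map_pow]
    exact hcross
  have d1 : (X (2 : Fin 3) : R) ∣ N * (q : R) ^ 2 := by
    rw [← key]
    exact ((dvd_mul_right (X 2) (1 - X 2 ^ 2)).mul_left (p ^ 2))
  have d2 : (X (2 : Fin 3) : R) ∣ (q : R) :=
    hprime.dvd_of_dvd_pow ((hprime.dvd_mul.mp d1).resolve_left hN)
  obtain ⟨q1, hq1⟩ := id d2
  have key2 : p ^ 2 * (1 - X 2 ^ 2) = N * (X 2 * q1 ^ 2) := by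
    have h3 : X 2 * (p ^ 2 * (1 - X 2 ^ 2)) = X 2 * (N * (X 2 * q1 ^ 2)) := by
      calc X 2 * (p ^ 2 * (1 - X 2 ^ 2)) = p ^ 2 * D := by rw [hDdef]; ring
        _ = N * (q : R) ^ 2 := key
        _ = X 2 * (N * (X 2 * q1 ^ 2)) := by rw [hq1]; ring
    exact mul_left_cancel₀ (X_ne_zero _) h3
  have d3 : (X (2 : Fin 3) : R) ∣ p ^ 2 * (1 - X 2 ^ 2) := by
    rw [key2]
    exact ((dvd_mul_right (X 2) (q1 ^ 2)).mul_left N)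
  have d4 : (X (2 : Fin 3) : R) ∣ p :=
    hprime.dvd_of_dvd_pow ((hprime.dvd_mul.mp d3).resolve_right hone)
  exact hprime.not_unit (IsFractionRing.num_den_reduced R f d4 d2)
end
end

section
/- Let k be a field of characteristic ≠ 2. Let R = k[x₁,y₁,x₂,y₂,x₃,y₃]/(yᵢ² − xᵢ(xᵢ²−1), i = 1,2,3), an integral domain, let K = Frac(R), and assume the images of all xᵢ, yᵢ are nonzero in K. Set b₂ = x₂/x₁, b₃ = x₃/x₁, a₂ = y₂/y₁, a₃ = y₃/y₁. Then a₂ does not lie in the subfield k(a₃, b₂, b₃) of K generated over k by a₃, b₂, b₃; consequently, since a₂² = (a₃²·b₂·(1−b₂²) + b₂·b₃·(b₂²−b₃²))/(b₃·(1−b₃²)) ∈ k(a₃,b₂,b₃), the field extension k(a₃,b₂,b₃) ⊆ k(a₂,a₃,b₂,b₃) has degree exactly 2. -/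
open MvPolynomial

noncomputable section

variable (k : Type*) [Field k] [(uenoIdeal k).IsPrime]

/-- The subfield `k(a₃, b₂, b₃)` of `K = k(Z)`. -/
def L1 : IntermediateField k (UenoField k) :=
  IntermediateField.adjoin k ({a3 k, b2 k, b3 k} : Set (UenoField k))
set_option synthInstance.maxHeartbeats 1000000
set_option maxHeartbeats 4000000
set_option linter.unusedSectionVars false

namespace UenoAux

variable (k : Type*) [Field k] [(uenoIdeal k).IsPrime]

-- shortcut instances to speed up typeclass search
local instance fastField : Field (UenoField k) := inferInstance
local instance fastDMA1 : DistribMulAction (UenoRing k) (UenoRing k) := inferInstance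
local instance fastDMA2 : DistribMulAction (UenoField k) (UenoField k) := inferInstance
local instance fastNAR : NonAssocRing (UenoField k) := inferInstance
local instance fastNAR2 : NonAssocRing (UenoRing k) := inferInstance
local instance fastAG : AddGroup (UenoField k) := inferInstance
local instance fastAG2 : AddGroup (UenoRing k) := inferInstance

/-- The canonical ring map from the polynomial ring to `K`. -/
def phi : MvPolynomial (Fin 6) k →+* UenoField k :=
  (algebraMap (UenoRing k) (UenoField k)).comp (Ideal.Quotient.mk (uenoIdeal k))

lemma phi_zero {p : MvPolynomial (Fin 6) k} (hp : p ∈ uenoIdeal k) : phi k p = 0 := by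
  rw [phi, RingHom.comp_apply, Ideal.Quotient.eq_zero_iff_mem.mpr hp, map_zero]

lemma phi_eq_zero_iff {p : MvPolynomial (Fin 6) k} : phi k p = 0 ↔ p ∈ uenoIdeal k := by
  constructor
  · intro h
    rw [phi, RingHom.comp_apply] at h
    rw [← Ideal.Quotient.eq_zero_iff_mem]
    apply IsFractionRing.injective (UenoRing k) (UenoField k)
    rw [h, map_zero]
  · exact phi_zero k

lemma sq1 : y1 k ^ 2 = x1 k * (x1 k ^ 2 - 1) := by
  have h := phi_zero k (Ideal.subset_span (by simp) :
    (X 1 : MvPolynomial (Fin 6) k) ^ 2 - X 0 * (X 0 ^ 2 - 1) ∈ uenoIdeal k)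
  rw [(phi k).map_sub, (phi k).map_pow, (phi k).map_mul, (phi k).map_sub, (phi k).map_pow,
    (phi k).map_one, sub_eq_zero] at h
  exact h

lemma sq2 : y2 k ^ 2 = x2 k * (x2 k ^ 2 - 1) := by
  have h := phi_zero k (Ideal.subset_span (by simp) :
    (X 3 : MvPolynomial (Fin 6) k) ^ 2 - X 2 * (X 2 ^ 2 - 1) ∈ uenoIdeal k)
  rw [(phi k).map_sub, (phi k).map_pow, (phi k).map_mul, (phi k).map_sub, (phi k).map_pow,
    (phi k).map_one, sub_eq_zero] at h
  exact h

lemma sq3 : y3 k ^ 2 = x3 k * (x3 k ^ 2 - 1) := by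
  have h := phi_zero k (Ideal.subset_span (by simp) :
    (X 5 : MvPolynomial (Fin 6) k) ^ 2 - X 4 * (X 4 ^ 2 - 1) ∈ uenoIdeal k)
  rw [(phi k).map_sub, (phi k).map_pow, (phi k).map_mul, (phi k).map_sub, (phi k).map_pow,
    (phi k).map_one, sub_eq_zero] at h
  exact h

/-- The involution `y₂ ↦ -y₂` on the polynomial ring. -/
def sigma0 : MvPolynomial (Fin 6) k →ₐ[k] MvPolynomial (Fin 6) k :=
  aeval (fun i => if i = 3 then - X 3 else X i)

lemma sigma0_mem {p : MvPolynomial (Fin 6) k} (hp : p ∈ uenoIdeal k) :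
    sigma0 k p ∈ uenoIdeal k := by
  refine Submodule.span_induction ?_ ?_ ?_ ?_ hp
  · intro x hx
    simp only [Set.mem_insert_iff, Set.mem_singleton_iff] at hx
    rcases hx with rfl | rfl | rfl
    · refine Ideal.subset_span ?_
      simp [sigma0]
    · have : sigma0 k (X 3 ^ 2 - X 2 * (X 2 ^ 2 - 1)) = X 3 ^ 2 - X 2 * (X 2 ^ 2 - 1) := by
        simp [sigma0]
      rw [this]
      exact Ideal.subset_span (by simp)
    · refine Ideal.subset_span ?_
      simp [sigma0]
  · simp
  · intro x y hx0 hy0 hx hy; simpa [map_add] using Ideal.add_mem _ hx hy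
  · intro x y hy0 hy
    rw [smul_eq_mul, map_mul]
    exact Ideal.mul_mem_left _ _ hy

/-- The involution descends to `R`. -/
def sigmaR : UenoRing k →ₐ[k] UenoRing k :=
  Ideal.Quotient.liftₐ (uenoIdeal k)
    ((Ideal.Quotient.mkₐ k (uenoIdeal k)).comp (sigma0 k))
    (fun a ha => by
      simpa [Ideal.Quotient.eq_zero_iff_mem] using sigma0_mem k ha)

lemma sigmaR_mk (p : MvPolynomial (Fin 6) k) :
    sigmaR k (Ideal.Quotient.mk (uenoIdeal k) p)
      = Ideal.Quotient.mk (uenoIdeal k) (sigma0 k p) := by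
  simp [sigmaR, Ideal.Quotient.liftₐ_apply]; rfl

lemma sigmaR_invol : (sigmaR k).comp (sigmaR k) = AlgHom.id k _ := by
  apply Ideal.Quotient.algHom_ext
  apply MvPolynomial.algHom_ext
  intro i
  simp only [AlgHom.comp_apply, Ideal.Quotient.mkₐ_eq_mk, AlgHom.id_apply]
  rw [sigmaR_mk]
  fin_cases i <;> simp [sigma0, sigmaR_mk]

/-- The involution as an algebra automorphism of `R`. -/
def sigmaRe : UenoRing k ≃ₐ[k] UenoRing k :=
  AlgEquiv.ofAlgHom (sigmaR k) (sigmaR k) (sigmaR_invol k) (sigmaR_invol k)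

/-- The involution as an automorphism of `K = Frac R` over `k`. -/
def sigmaK : UenoField k ≃ₐ[k] UenoField k :=
  IsFractionRing.algEquivOfAlgEquiv (sigmaRe k)

lemma sigmaK_div (a b : UenoField k) : sigmaK k (a / b) = sigmaK k a / sigmaK k b :=
  map_div₀ (sigmaK k) a b

lemma sigmaK_xv (i : Fin 6) :
    sigmaK k (xv k i) = if i = 3 then - xv k 3 else xv k i := by
  rw [xv, sigmaK, IsFractionRing.algEquivOfAlgEquiv_algebraMap]
  have h : sigmaRe k (Ideal.Quotient.mk (uenoIdeal k) (X i))
      = Ideal.Quotient.mk (uenoIdeal k) (sigma0 k (X i)) := sigmaR_mk k _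
  rw [h]
  by_cases h3 : i = 3
  · subst h3; simp [sigma0, xv]
  · simp [sigma0, h3, xv]

lemma sigmaK_x1 : sigmaK k (x1 k) = x1 k := by simpa [x1] using sigmaK_xv k 0
lemma sigmaK_y1 : sigmaK k (y1 k) = y1 k := by simpa [y1] using sigmaK_xv k 1
lemma sigmaK_x2 : sigmaK k (x2 k) = x2 k := by simpa [x2] using sigmaK_xv k 2
lemma sigmaK_y2 : sigmaK k (y2 k) = - y2 k := by simpa [y2] using sigmaK_xv k 3
lemma sigmaK_x3 : sigmaK k (x3 k) = x3 k := by simpa [x3] using sigmaK_xv k 4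
lemma sigmaK_y3 : sigmaK k (y3 k) = y3 k := by simpa [y3] using sigmaK_xv k 5

/-- The fixed field of the involution. -/
def fixedF : IntermediateField k (UenoField k) :=
  { AlgHom.equalizer (sigmaK k).toAlgHom (AlgHom.id k (UenoField k)) with
    inv_mem' := fun x hx => by
      have hx' : sigmaK k x = x := hx
      show sigmaK k x⁻¹ = x⁻¹
      rw [map_inv₀, hx'] }

lemma mem_fixedF {x : UenoField k} : x ∈ fixedF k ↔ sigmaK k x = x := Iff.rfl

lemma L1_le_fixedF : L1 k ≤ fixedF k := by
  rw [L1, IntermediateField.adjoin_le_iff]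
  rintro x (rfl | rfl | rfl) <;> refine (mem_fixedF k).mpr ?_
  · rw [a3, sigmaK_div, sigmaK_y3, sigmaK_y1]
  · rw [b2, sigmaK_div, sigmaK_x2, sigmaK_x1]
  · rw [b3, sigmaK_div, sigmaK_x3, sigmaK_x1]

lemma two_ne_zero_K (h2 : (2 : k) ≠ 0) : (2 : UenoField k) ≠ 0 := by
  intro h
  apply h2
  have h' : algebraMap k (UenoField k) 2 = algebraMap k (UenoField k) 0 := by
    rw [map_ofNat, map_zero, h]
  exact (algebraMap k (UenoField k)).injective h'

lemma a2_not_mem (h2 : (2 : k) ≠ 0) (hne : ∀ i : Fin 6, xv k i ≠ 0) :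
    a2 k ∉ L1 k := by
  intro h
  have hfix : sigmaK k (a2 k) = a2 k := (mem_fixedF k).mp (L1_le_fixedF k h)
  have hneg : sigmaK k (a2 k) = - a2 k := by
    rw [a2, sigmaK_div, sigmaK_y2, sigmaK_y1]; ring
  have ha2 : a2 k ≠ 0 := div_ne_zero (hne 3) (hne 1)
  have h0 : (2 : UenoField k) * a2 k = 0 := by
    rw [two_mul]
    nth_rewrite 1 [← hfix]
    rw [hneg, neg_add_cancel]
  rcases mul_eq_zero.mp h0 with h' | h'
  · exact two_ne_zero_K k h2 h'
  · exact ha2 h'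

lemma x1_sq_ne_x3_sq : x1 k ^ 2 - x3 k ^ 2 ≠ 0 := by
  intro h
  have he : phi k ((X 0 : MvPolynomial (Fin 6) k) ^ 2 - X 4 ^ 2) = x1 k ^ 2 - x3 k ^ 2 := by
    rw [(phi k).map_sub, (phi k).map_pow, (phi k).map_pow]; rfl
  have hmem : ((X 0 : MvPolynomial (Fin 6) k) ^ 2 - X 4 ^ 2) ∈ uenoIdeal k :=
    (phi_eq_zero_iff k).mp (by rw [he, h])
  have hker : uenoIdeal k ≤
      RingHom.ker (eval (fun i : Fin 6 => if i = 4 then (1 : k) else 0)) := by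
    rw [uenoIdeal, Ideal.span_le]
    rintro p (rfl | rfl | rfl) <;> simp [RingHom.mem_ker]
  have h0 := hker hmem
  rw [RingHom.mem_ker] at h0
  simp at h0

lemma key_identity (hne : ∀ i : Fin 6, xv k i ≠ 0) :
    a2 k ^ 2 =
      (a3 k ^ 2 * b2 k * (1 - b2 k ^ 2) + b2 k * b3 k * (b2 k ^ 2 - b3 k ^ 2)) /
        (b3 k * (1 - b3 k ^ 2)) := by
  have hx1 : x1 k ≠ 0 := hne 0
  have hx3 : x3 k ≠ 0 := hne 4
  have hy1 : y1 k ≠ 0 := hne 1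
  have h11 : x1 k ^ 2 - 1 ≠ 0 := by
    intro h
    apply hy1
    have h' := sq1 k
    rw [h, mul_zero, pow_eq_zero_iff (two_ne_zero)] at h'
    exact h'
  have hD1 : x1 k * (x1 k ^ 2 - 1) ≠ 0 := mul_ne_zero hx1 h11
  have e2 : a2 k ^ 2 = x2 k * (x2 k ^ 2 - 1) / (x1 k * (x1 k ^ 2 - 1)) := by
    rw [a2, div_pow, sq1, sq2]
  have e3 : a3 k ^ 2 = x3 k * (x3 k ^ 2 - 1) / (x1 k * (x1 k ^ 2 - 1)) := by
    rw [a3, div_pow, sq1, sq3]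
  have hb3 : b3 k ≠ 0 := div_ne_zero hx3 hx1
  have h1b3 : 1 - b3 k ^ 2 ≠ 0 := by
    have he : 1 - b3 k ^ 2 = (x1 k ^ 2 - x3 k ^ 2) / x1 k ^ 2 := by
      rw [b3, div_pow, sub_div' (pow_ne_zero 2 hx1), one_mul]
    rw [he]
    exact div_ne_zero (x1_sq_ne_x3_sq k) (pow_ne_zero _ hx1)
  rw [eq_div_iff (mul_ne_zero hb3 h1b3), e2, e3, b2, b3]
  field_simp
  ring

end UenoAux

set_option synthInstance.maxHeartbeats 1000000 in
/-- **Key step of Proposition 2.5**: `a₂ ∉ k(a₃, b₂, b₃)`, while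
`a₂² = (a₃²b₂(1-b₂²) + b₂b₃(b₂²-b₃²))/(b₃(1-b₃²)) ∈ k(a₃, b₂, b₃)`; consequently the
extension `k(a₃, b₂, b₃) ⊆ k(a₂, a₃, b₂, b₃)` has degree exactly `2`. -/
theorem a2_not_mem_and_degree_two (h2 : (2 : k) ≠ 0)
    (hne : ∀ i : Fin 6, xv k i ≠ 0) :
    a2 k ∉ L1 k ∧
    a2 k ^ 2 =
      (a3 k ^ 2 * b2 k * (1 - b2 k ^ 2) + b2 k * b3 k * (b2 k ^ 2 - b3 k ^ 2)) /
        (b3 k * (1 - b3 k ^ 2)) ∧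
    a2 k ^ 2 ∈ L1 k ∧
    (IntermediateField.adjoin (L1 k) ({a2 k} : Set (UenoField k))).restrictScalars k =
      IntermediateField.adjoin k ({a2 k, a3 k, b2 k, b3 k} : Set (UenoField k)) ∧
    Module.finrank (L1 k)
      (IntermediateField.adjoin (L1 k) ({a2 k} : Set (UenoField k))) = 2 := by
  classical
  have hnotmem : a2 k ∉ L1 k := UenoAux.a2_not_mem k h2 hne
  have hkey := UenoAux.key_identity k hne
  have ha3 : a3 k ∈ L1 k := IntermediateField.subset_adjoin k _ (Set.mem_insert _ _)
  have hb2 : b2 k ∈ L1 k := IntermediateField.subset_adjoin k _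
    (Set.mem_insert_of_mem _ (Set.mem_insert _ _))
  have hb3 : b3 k ∈ L1 k := IntermediateField.subset_adjoin k _
    (Set.mem_insert_of_mem _ (Set.mem_insert_of_mem _ rfl))
  have hsq : a2 k ^ 2 ∈ L1 k := by
    rw [hkey]
    exact div_mem
      (add_mem
        (mul_mem (mul_mem (pow_mem ha3 2) hb2) (sub_mem (one_mem _) (pow_mem hb2 2)))
        (mul_mem (mul_mem hb2 hb3) (sub_mem (pow_mem hb2 2) (pow_mem hb3 2))))
      (mul_mem hb3 (sub_mem (one_mem _) (pow_mem hb3 2)))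
  have h4 : (IntermediateField.adjoin (L1 k) ({a2 k} : Set (UenoField k))).restrictScalars k =
      IntermediateField.adjoin k ({a2 k, a3 k, b2 k, b3 k} : Set (UenoField k)) := by
    rw [show L1 k = IntermediateField.adjoin k ({a3 k, b2 k, b3 k} : Set (UenoField k)) from rfl,
      IntermediateField.adjoin_adjoin_left, Set.union_comm, Set.singleton_union]
  set c : L1 k := ⟨a2 k ^ 2, hsq⟩ with hc
  have hcoe : algebraMap (L1 k) (UenoField k) c = a2 k ^ 2 := rfl
  have hroot : (Polynomial.aeval (a2 k)) (Polynomial.X ^ 2 - Polynomial.C c) = 0 := by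
    rw [map_sub, map_pow, Polynomial.aeval_X, Polynomial.aeval_C, hcoe, sub_self]
  have hmonic : (Polynomial.X ^ 2 - Polynomial.C c).Monic :=
    Polynomial.monic_X_pow_sub_C c (by norm_num)
  have hirr : Irreducible (Polynomial.X ^ 2 - Polynomial.C c) := by
    apply X_pow_sub_C_irreducible_of_prime Nat.prime_two
    intro b hb
    have hbK : (algebraMap (L1 k) (UenoField k) b) ^ 2 = a2 k ^ 2 := by
      have hb' := congrArg (algebraMap (L1 k) (UenoField k)) hb
      rw [map_pow] at hb'
      rw [hb', hcoe]
    have hsplit : (a2 k - algebraMap (L1 k) (UenoField k) b) *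
        (a2 k + algebraMap (L1 k) (UenoField k) b) = 0 := by
      linear_combination - hbK
    rcases mul_eq_zero.mp hsplit with h' | h'
    · rw [sub_eq_zero] at h'
      exact hnotmem (h' ▸ b.2)
    · have h'' : a2 k = - algebraMap (L1 k) (UenoField k) b :=
        eq_neg_of_add_eq_zero_left h'
      exact hnotmem (h'' ▸ neg_mem b.2)
  have hmin : minpoly (L1 k) (a2 k) = Polynomial.X ^ 2 - Polynomial.C c :=
    (minpoly.eq_of_irreducible_of_monic hirr hroot hmonic).symm
  have hint : IsIntegral (L1 k) (a2 k) := ⟨_, hmonic, hroot⟩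
  have h5 : Module.finrank (L1 k)
      (IntermediateField.adjoin (L1 k) ({a2 k} : Set (UenoField k))) = 2 := by
    rw [IntermediateField.adjoin.finrank hint, hmin, Polynomial.natDegree_X_pow_sub_C]
  exact ⟨hnotmem, hkey, hsq, h4, h5⟩
end
end

section
/- Let k be a field of characteristic ≠ 2. Then the polynomial f = a²·β·(1−β²) − α²·b·(1−b²) − b·β·(b²−β²) is irreducible in the polynomial ring k[a, α, b, β] in four variables. -/
open MvPolynomial

section Aux

variable {k : Type*} [Field k]

private lemma aux_poly_ne_zero : (Polynomial.X - Polynomial.X ^ 3 : Polynomial k) ≠ 0 := by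
  intro h
  have h3 := congrArg (Polynomial.coeff · 1) h
  simp [Polynomial.coeff_X_pow] at h3

private lemma aux_poly_ne_zero' : (Polynomial.X ^ 3 - Polynomial.X ^ 2 : Polynomial k) ≠ 0 := by
  intro h
  have h3 := congrArg (Polynomial.coeff · 3) h
  simp [Polynomial.coeff_X_pow] at h3

private lemma aux_X_sub_cube_ne_zero {n : ℕ} (i : Fin n) :
    (X i - X i ^ 3 : MvPolynomial (Fin n) k) ≠ 0 := by
  intro h
  have h2 := congrArg (aeval (fun _ : Fin n => (Polynomial.X : Polynomial k))) h
  simp only [map_sub, map_pow, aeval_X, map_zero] at h2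
  exact aux_poly_ne_zero h2

private lemma aux_prime_X0 (n : ℕ) : Prime (X 0 : MvPolynomial (Fin (n + 1)) k) := by
  refine (MulEquiv.prime_iff (finSuccEquiv k n).toRingEquiv.toMulEquiv).mp ?_
  have h : (finSuccEquiv k n).toRingEquiv.toMulEquiv (X 0 : MvPolynomial (Fin (n + 1)) k)
      = Polynomial.X := finSuccEquiv_X_zero
  rw [h]
  exact Polynomial.prime_X

private lemma aux_prime_X1 : Prime (X 1 : MvPolynomial (Fin 3) k) := by
  refine (MulEquiv.prime_iff (finSuccEquiv k 2).toRingEquiv.toMulEquiv).mp ?_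
  have h : (finSuccEquiv k 2).toRingEquiv.toMulEquiv (X 1 : MvPolynomial (Fin 3) k)
      = Polynomial.C (X 0) := finSuccEquiv_X_succ (j := 0)
  rw [h]
  exact Polynomial.prime_C_iff.mpr (aux_prime_X0 1)

/-- The evaluation `X 1 ↦ 0`, other variables to `Polynomial.X`. -/
private noncomputable def sig : MvPolynomial (Fin 3) k →ₐ[k] Polynomial k :=
  aeval (fun i : Fin 3 => if i = 1 then 0 else (Polynomial.X : Polynomial k))

private lemma aux_not_X1_dvd_c :
    ¬ (X 1 : MvPolynomial (Fin 3) k) ∣ (X 2 - X 2 ^ 3) := by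
  rintro ⟨t, ht⟩
  have h := congrArg (sig (k := k)) ht
  simp only [sig, map_sub, map_pow, map_mul, aeval_X,
    (by decide : (2 : Fin 3) ≠ 1), (by decide : (0 : Fin 3) ≠ 1), if_true, if_false,
    ite_true, ite_false, zero_mul, mul_zero] at h
  exact aux_poly_ne_zero h

private lemma aux_not_X1_dvd_w :
    ¬ (X 1 : MvPolynomial (Fin 3) k) ∣
      (X 0 ^ 2 * (X 1 ^ 2 - 1) + X 2 * (X 2 ^ 2 - X 1 ^ 2)) := by
  rintro ⟨t, ht⟩
  have h := congrArg (sig (k := k)) ht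
  simp only [sig, map_add, map_sub, map_pow, map_mul, map_one, aeval_X,
    (by decide : (2 : Fin 3) ≠ 1), (by decide : (0 : Fin 3) ≠ 1), if_true, if_false,
    ite_true, ite_false, zero_mul, mul_zero] at h
  apply aux_poly_ne_zero' (k := k)
  linear_combination h

/-- Core coprimality: any common divisor of `c = X₂ - X₂³` and
`d = X₀²(X₁³ - X₁) + X₁X₂(X₂² - X₁²)` is a unit. -/
private lemma aux_common_dvd_isUnit (r : MvPolynomial (Fin 3) k)
    (hc : r ∣ (X 2 - X 2 ^ 3))
    (hd : r ∣ (X 0 ^ 2 * (X 1 ^ 3 - X 1) + X 1 * X 2 * (X 2 ^ 2 - X 1 ^ 2))) :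
    IsUnit r := by
  -- first descent: pull out the variable X 0
  have e2X1 : (finSuccEquiv k 2) (X 1 : MvPolynomial (Fin 3) k) = Polynomial.C (X 0) :=
    finSuccEquiv_X_succ (j := 0)
  have e2X2 : (finSuccEquiv k 2) (X 2 : MvPolynomial (Fin 3) k) = Polynomial.C (X 1) :=
    finSuccEquiv_X_succ (j := 1)
  have ec : (finSuccEquiv k 2) (X 2 - X 2 ^ 3 : MvPolynomial (Fin 3) k)
      = Polynomial.C (X 1 - X 1 ^ 3 : MvPolynomial (Fin 2) k) := by
    simp [map_sub, map_pow, e2X2]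
  have ed : (finSuccEquiv k 2)
        (X 0 ^ 2 * (X 1 ^ 3 - X 1) + X 1 * X 2 * (X 2 ^ 2 - X 1 ^ 2) : MvPolynomial (Fin 3) k)
      = Polynomial.C (X 0 ^ 3 - X 0 : MvPolynomial (Fin 2) k) * Polynomial.X ^ 2
        + Polynomial.C (X 0 * X 1 * (X 1 ^ 2 - X 0 ^ 2) : MvPolynomial (Fin 2) k) := by
    simp only [map_add, map_sub, map_mul, map_pow, e2X1, e2X2, finSuccEquiv_X_zero,
      map_one]
    ring
  have h1 : (finSuccEquiv k 2) r ∣ Polynomial.C (X 1 - X 1 ^ 3 : MvPolynomial (Fin 2) k) := by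
    have := map_dvd (finSuccEquiv k 2) hc
    rwa [ec] at this
  have hC0 : (Polynomial.C (X 1 - X 1 ^ 3 : MvPolynomial (Fin 2) k)) ≠ 0 :=
    Polynomial.C_ne_zero.mpr (aux_X_sub_cube_ne_zero (k := k) (1 : Fin 2))
  have hdeg : ((finSuccEquiv k 2) r).natDegree = 0 := by
    have h0 := Polynomial.natDegree_le_of_dvd h1 hC0
    rw [Polynomial.natDegree_C] at h0
    exact Nat.le_zero.mp h0
  obtain ⟨r2, hr2⟩ := Polynomial.natDegree_eq_zero.mp hdeg
  have hr2v : r2 ∣ (X 1 - X 1 ^ 3 : MvPolynomial (Fin 2) k) := by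
    have := (Polynomial.C_dvd_iff_dvd_coeff r2 _).mp (hr2 ▸ h1) 0
    rwa [Polynomial.coeff_C_zero] at this
  have hr2u : r2 ∣ (X 0 ^ 3 - X 0 : MvPolynomial (Fin 2) k) := by
    have hdvd : Polynomial.C r2 ∣ (finSuccEquiv k 2)
        (X 0 ^ 2 * (X 1 ^ 3 - X 1) + X 1 * X 2 * (X 2 ^ 2 - X 1 ^ 2) : MvPolynomial (Fin 3) k) :=
      by rw [hr2]; exact map_dvd (finSuccEquiv k 2) hd
    rw [ed] at hdvd
    have := (Polynomial.C_dvd_iff_dvd_coeff r2 _).mp hdvd 2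
    simp only [Polynomial.coeff_add, Polynomial.coeff_C_mul, Polynomial.coeff_X_pow,
      Polynomial.coeff_C, Polynomial.mul_coeff_zero] at this
    simpa using this
  -- second descent: pull out the variable X 0 again
  have e1X1 : (finSuccEquiv k 1) (X 1 : MvPolynomial (Fin 2) k) = Polynomial.C (X 0) :=
    finSuccEquiv_X_succ (j := 0)
  have ev : (finSuccEquiv k 1) (X 1 - X 1 ^ 3 : MvPolynomial (Fin 2) k)
      = Polynomial.C (X 0 - X 0 ^ 3 : MvPolynomial (Fin 1) k) := by
    simp [map_sub, map_pow, e1X1]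
  have eu : (finSuccEquiv k 1) (X 0 ^ 3 - X 0 : MvPolynomial (Fin 2) k)
      = Polynomial.X ^ 3 - Polynomial.X := by
    simp [map_sub, map_pow, finSuccEquiv_X_zero]
  have h2 : (finSuccEquiv k 1) r2 ∣ Polynomial.C (X 0 - X 0 ^ 3 : MvPolynomial (Fin 1) k) := by
    have := map_dvd (finSuccEquiv k 1) hr2v
    rwa [ev] at this
  have hC1 : (Polynomial.C (X 0 - X 0 ^ 3 : MvPolynomial (Fin 1) k)) ≠ 0 :=
    Polynomial.C_ne_zero.mpr (aux_X_sub_cube_ne_zero (k := k) (0 : Fin 1))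
  have hdeg1 : ((finSuccEquiv k 1) r2).natDegree = 0 := by
    have h0 := Polynomial.natDegree_le_of_dvd h2 hC1
    rw [Polynomial.natDegree_C] at h0
    exact Nat.le_zero.mp h0
  obtain ⟨r1, hr1⟩ := Polynomial.natDegree_eq_zero.mp hdeg1
  have hr1u : r1 ∣ (-1 : MvPolynomial (Fin 1) k) := by
    have hdvd : Polynomial.C r1 ∣ (Polynomial.X ^ 3 - Polynomial.X :
        Polynomial (MvPolynomial (Fin 1) k)) := by
      rw [← eu, hr1]; exact map_dvd (finSuccEquiv k 1) hr2u
    have := (Polynomial.C_dvd_iff_dvd_coeff r1 _).mp hdvd 1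
    rwa [Polynomial.coeff_sub, Polynomial.coeff_X_pow, Polynomial.coeff_X_one,
      if_neg (by decide), zero_sub] at this
  have hu1 : IsUnit r1 := isUnit_of_dvd_unit hr1u isUnit_one.neg
  have hu2 : IsUnit r2 := by
    have := (Polynomial.isUnit_C.mpr hu1).map (finSuccEquiv k 1).symm
    rw [hr1] at this
    simpa using this
  have := (Polynomial.isUnit_C.mpr hu2).map (finSuccEquiv k 2).symm
  rw [hr2] at this
  simpa using this

end Aux

/-- The defining polynomial `a²β(1-β²) - α²b(1-b²) - bβ(b²-β²)` of the hypersurface `H`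
of Proposition 2.5 is irreducible in `k[a, α, b, β]` for any field `k` of characteristic ≠ 2.
Variables: `a = X 0`, `α = X 1`, `b = X 2`, `β = X 3`. -/
theorem hypersurface_polynomial_irreducible (k : Type*) [Field k] (h2 : (2 : k) ≠ 0) :
    Irreducible
      (X 0 ^ 2 * X 3 * (1 - X 3 ^ 2) - X 1 ^ 2 * X 2 * (1 - X 2 ^ 2) -
        X 2 * X 3 * (X 2 ^ 2 - X 3 ^ 2) : MvPolynomial (Fin 4) k) := by
  set c : MvPolynomial (Fin 3) k := X 2 - X 2 ^ 3 with hc_def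
  set d : MvPolynomial (Fin 3) k :=
    X 0 ^ 2 * (X 1 ^ 3 - X 1) + X 1 * X 2 * (X 2 ^ 2 - X 1 ^ 2) with hd_def
  set g : Polynomial (MvPolynomial (Fin 3) k) :=
    Polynomial.C c * Polynomial.X ^ 2 + Polynomial.C d with hg_def
  have hc0 : c ≠ 0 := aux_X_sub_cube_ne_zero (2 : Fin 3)
  -- `g` is the image of our polynomial under `finSuccEquiv k 3`
  have e3X1 : (finSuccEquiv k 3) (X 1 : MvPolynomial (Fin 4) k) = Polynomial.C (X 0) :=
    finSuccEquiv_X_succ (j := 0)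
  have e3X2 : (finSuccEquiv k 3) (X 2 : MvPolynomial (Fin 4) k) = Polynomial.C (X 1) :=
    finSuccEquiv_X_succ (j := 1)
  have e3X3 : (finSuccEquiv k 3) (X 3 : MvPolynomial (Fin 4) k) = Polynomial.C (X 2) :=
    finSuccEquiv_X_succ (j := 2)
  have key : (finSuccEquiv k 3)
      (X 0 ^ 2 * X 3 * (1 - X 3 ^ 2) - X 1 ^ 2 * X 2 * (1 - X 2 ^ 2) -
        X 2 * X 3 * (X 2 ^ 2 - X 3 ^ 2) : MvPolynomial (Fin 4) k) = g := by
    simp only [map_sub, map_mul, map_pow, map_one, e3X1, e3X2, e3X3, finSuccEquiv_X_zero]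
    rw [hg_def, hc_def, hd_def]
    push_cast [Polynomial.C_sub, Polynomial.C_add, Polynomial.C_mul, Polynomial.C_pow]
    ring
  -- degree and coefficients of g
  have hgdeg : g.natDegree = 2 := by
    have : g = Polynomial.C c * Polynomial.X ^ 2 + Polynomial.C 0 * Polynomial.X
        + Polynomial.C d := by rw [hg_def, map_zero]; ring
    rw [this]
    exact Polynomial.natDegree_quadratic hc0
  have hcoeff2 : g.coeff 2 = c := by
    simp [hg_def, Polynomial.coeff_C]
  have hcoeff1 : g.coeff 1 = 0 := by
    simp [hg_def, Polynomial.coeff_C, Polynomial.coeff_X_pow]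
  have hcoeff0 : g.coeff 0 = d := by
    simp [hg_def, Polynomial.coeff_C, Polynomial.coeff_X_pow]
  -- the Eisenstein ideal
  have hX1 : Prime (X 1 : MvPolynomial (Fin 3) k) := aux_prime_X1
  have hPrime : (Ideal.span {(X 1 : MvPolynomial (Fin 3) k)}).IsPrime :=
    (Ideal.span_singleton_prime hX1.ne_zero).mpr hX1
  have hEis : g.IsEisensteinAt (Ideal.span {(X 1 : MvPolynomial (Fin 3) k)}) := by
    constructor
    · rw [Polynomial.leadingCoeff, hgdeg, hcoeff2, Ideal.mem_span_singleton]
      exact aux_not_X1_dvd_c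
    · intro n hn
      rw [hgdeg] at hn
      interval_cases n
      · rw [hcoeff0, Ideal.mem_span_singleton]
        exact ⟨X 0 ^ 2 * (X 1 ^ 2 - 1) + X 2 * (X 2 ^ 2 - X 1 ^ 2), by rw [hd_def]; ring⟩
      · rw [hcoeff1]; exact zero_mem _
    · rw [hcoeff0, Ideal.span_singleton_pow, Ideal.mem_span_singleton]
      rintro ⟨t, ht⟩
      apply aux_not_X1_dvd_w (k := k)
      have hd' : d = X 1 * (X 0 ^ 2 * (X 1 ^ 2 - 1) + X 2 * (X 2 ^ 2 - X 1 ^ 2)) := by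
        rw [hd_def]; ring
      have : X 1 * (X 0 ^ 2 * (X 1 ^ 2 - 1) + X 2 * (X 2 ^ 2 - X 1 ^ 2))
          = X 1 * (X 1 * t) := by rw [← hd', ht]; ring
      have h3 := mul_left_cancel₀ hX1.ne_zero this
      exact ⟨t, h3⟩
  have hPrim : g.IsPrimitive := by
    intro r hr
    have hrc : r ∣ c := by
      have := (Polynomial.C_dvd_iff_dvd_coeff r g).mp hr 2
      rwa [hcoeff2] at this
    have hrd : r ∣ d := by
      have := (Polynomial.C_dvd_iff_dvd_coeff r g).mp hr 0
      rwa [hcoeff0] at this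
    exact aux_common_dvd_isUnit r hrc hrd
  have hgirr : Irreducible g := hEis.irreducible hPrime hPrim (by rw [hgdeg]; norm_num)
  exact (MulEquiv.irreducible_iff ((finSuccEquiv k 3).toRingEquiv.toMulEquiv)).mp (key ▸ hgirr)
end

section
/- Let k be a field of characteristic ≠ 2, and let P, Q, R be polynomials in the polynomial ring k[b, β] in two variables satisfying the identity P²·β·(1−β²) = R²·b·(1−b²) + Q²·b·β·(b²−β²) in k[b,β]. Then the product b·β divides each of P, Q, and R in k[b,β]. In particular, if P, Q, R have no nonconstant common factor, then P = Q = R = 0. -/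
open MvPolynomial

noncomputable section DDaux

variable {k : Type*} [Field k]

/-- evaluation `b ↦ 0`, `β ↦ X`. -/
private noncomputable def ev0 : MvPolynomial (Fin 2) k →ₐ[k] Polynomial k :=
  aeval ![0, Polynomial.X]

/-- evaluation `b ↦ X`, `β ↦ 0`. -/
private noncomputable def ev1 : MvPolynomial (Fin 2) k →ₐ[k] Polynomial k :=
  aeval ![Polynomial.X, 0]

private lemma ev0_X0 : ev0 (X 0 : MvPolynomial (Fin 2) k) = 0 := by simp [ev0]
private lemma ev0_X1 : ev0 (X 1 : MvPolynomial (Fin 2) k) = Polynomial.X := by simp [ev0]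
private lemma ev1_X0 : ev1 (X 0 : MvPolynomial (Fin 2) k) = Polynomial.X := by simp [ev1]
private lemma ev1_X1 : ev1 (X 1 : MvPolynomial (Fin 2) k) = 0 := by simp [ev1]

private lemma dvd_sub_aux (i : Fin 2) (e : MvPolynomial (Fin 2) k →ₐ[k] Polynomial k)
    (ι : Polynomial k →ₐ[k] MvPolynomial (Fin 2) k)
    (h : ∀ j : Fin 2, X i ∣ X j - ι (e (X j)))
    (p : MvPolynomial (Fin 2) k) : X i ∣ p - ι (e p) := by
  induction p using MvPolynomial.induction_on with
  | C a =>
      have hc : ι (Polynomial.C a) = C a := by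
        rw [← Polynomial.algebraMap_eq, AlgHom.commutes, algebraMap_eq]
      simp [hc]
  | add p q hp hq => simpa [map_add, sub_add_sub_comm] using dvd_add hp hq
  | mul_X p j hp =>
      have hrw : p * X j - ι (e (p * X j)) =
          (p - ι (e p)) * X j + ι (e p) * (X j - ι (e (X j))) := by
        simp only [map_mul]; ring
      rw [hrw]
      exact dvd_add (hp.mul_right _) ((h j).mul_left _)

private lemma X0_dvd_iff (p : MvPolynomial (Fin 2) k) :
    (X 0 : MvPolynomial (Fin 2) k) ∣ p ↔ ev0 p = 0 := by
  constructor
  · rintro ⟨t, rfl⟩; simp [map_mul, ev0_X0]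
  · intro h
    have hd := dvd_sub_aux 0 ev0 (Polynomial.aeval (X 1)) (fun j => ?_) p
    · rwa [h, map_zero, sub_zero] at hd
    · fin_cases j
      · simpa [ev0_X0] using dvd_refl (X 0 : MvPolynomial (Fin 2) k)
      · simp [ev0_X1]

private lemma X1_dvd_iff (p : MvPolynomial (Fin 2) k) :
    (X 1 : MvPolynomial (Fin 2) k) ∣ p ↔ ev1 p = 0 := by
  constructor
  · rintro ⟨t, rfl⟩; simp [map_mul, ev1_X1]
  · intro h
    have hd := dvd_sub_aux 1 ev1 (Polynomial.aeval (X 0)) (fun j => ?_) p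
    · rwa [h, map_zero, sub_zero] at hd
    · fin_cases j
      · simp [ev1_X0]
      · simpa [ev1_X1] using dvd_refl (X 1 : MvPolynomial (Fin 2) k)

private lemma one_sub_X_sq_ne_zero : (1 - Polynomial.X ^ 2 : Polynomial k) ≠ 0 := by
  intro h
  have := congrArg (fun f : Polynomial k => Polynomial.coeff f 2) h
  simp [Polynomial.coeff_one] at this

private lemma sq_eq_X_mul_sq {r q : Polynomial k} (h : r ^ 2 = Polynomial.X * q ^ 2) :
    r = 0 ∧ q = 0 := by
  by_cases hq : q = 0
  · subst hq
    have hr : r = 0 := pow_eq_zero_iff two_ne_zero |>.mp (by simpa using h)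
    exact ⟨hr, rfl⟩
  · exfalso
    have hr : r ≠ 0 := by
      intro hr0; rw [hr0] at h
      have h' : Polynomial.X * q ^ 2 = 0 := by simpa using h.symm
      rcases mul_eq_zero.mp h' with h1 | h2
      · exact Polynomial.X_ne_zero h1
      · exact hq (pow_eq_zero_iff two_ne_zero |>.mp h2)
    have hdeg := congrArg Polynomial.natDegree h
    rw [Polynomial.natDegree_pow, Polynomial.natDegree_mul Polynomial.X_ne_zero
      (pow_ne_zero _ hq), Polynomial.natDegree_X, Polynomial.natDegree_pow] at hdeg
    omega

end DDaux

/-- The divisibility descent in the proof of Remark 2.7: if `P, Q, R ∈ k[b, β]`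
(`char k ≠ 2`, `b = X 0`, `β = X 1`) satisfy
`P²β(1-β²) = R²b(1-b²) + Q²bβ(b²-β²)`, then `bβ` divides each of `P`, `Q`, `R`;
in particular, if `P, Q, R` have no nonconstant common factor then `P = Q = R = 0`. -/
theorem divisibility_descent (k : Type*) [Field k] (h2 : (2 : k) ≠ 0)
    (P Q R : MvPolynomial (Fin 2) k)
    (hrel : P ^ 2 * X 1 * (1 - X 1 ^ 2) =
      R ^ 2 * X 0 * (1 - X 0 ^ 2) + Q ^ 2 * X 0 * X 1 * (X 0 ^ 2 - X 1 ^ 2)) :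
    (X 0 * X 1 ∣ P) ∧ (X 0 * X 1 ∣ Q) ∧ (X 0 * X 1 ∣ R) ∧
    ((∀ d : MvPolynomial (Fin 2) k, d ∣ P → d ∣ Q → d ∣ R → IsUnit d) →
      P = 0 ∧ Q = 0 ∧ R = 0) := by
  classical
  -- Step 1: b ∣ P (set b = 0)
  have e0rel := congrArg (ev0 (k := k)) hrel
  simp only [map_add, map_mul, map_sub, map_one, map_pow, ev0_X0, ev0_X1,
    mul_zero, zero_mul, add_zero, zero_add] at e0rel
  have hP0 : ev0 P = 0 := by
    rcases mul_eq_zero.mp e0rel with h | h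
    · rcases mul_eq_zero.mp h with h' | h'
      · exact pow_eq_zero_iff two_ne_zero |>.mp h'
      · exact absurd h' Polynomial.X_ne_zero
    · exact absurd h one_sub_X_sq_ne_zero
  obtain ⟨P1, hP1⟩ := (X0_dvd_iff P).mpr hP0
  -- Step 2: β ∣ R (set β = 0)
  have e1rel := congrArg (ev1 (k := k)) hrel
  simp only [map_add, map_mul, map_sub, map_one, map_pow, ev1_X0, ev1_X1,
    mul_zero, zero_mul, add_zero, zero_add] at e1rel
  have hR0 : ev1 R = 0 := by
    rcases mul_eq_zero.mp e1rel.symm with h | h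
    · rcases mul_eq_zero.mp h with h' | h'
      · exact pow_eq_zero_iff two_ne_zero |>.mp h'
      · exact absurd h' Polynomial.X_ne_zero
    · exact absurd h one_sub_X_sq_ne_zero
  obtain ⟨R1, hR1⟩ := (X1_dvd_iff R).mpr hR0
  -- Step 3: cancel bβ
  rw [hP1, hR1] at hrel
  have hXX : (X 0 * X 1 : MvPolynomial (Fin 2) k) ≠ 0 :=
    mul_ne_zero (X_ne_zero _) (X_ne_zero _)
  have hrel2 : X 0 * P1 ^ 2 * (1 - X 1 ^ 2) =
      X 1 * R1 ^ 2 * (1 - X 0 ^ 2) + Q ^ 2 * (X 0 ^ 2 - X 1 ^ 2) := by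
    apply mul_left_cancel₀ hXX
    linear_combination hrel
  -- Step 4: set b = 0 in the reduced relation
  have e0rel2 := congrArg (ev0 (k := k)) hrel2
  simp only [map_add, map_mul, map_sub, map_one, map_pow, ev0_X0, ev0_X1,
    mul_zero, zero_mul, add_zero, zero_add] at e0rel2
  have hXR : Polynomial.X * ((ev0 R1) ^ 2 - Polynomial.X * (ev0 Q) ^ 2) = 0 := by
    linear_combination -e0rel2
  have hRQ : (ev0 R1) ^ 2 = Polynomial.X * (ev0 Q) ^ 2 := by
    rcases mul_eq_zero.mp hXR with h | h
    · exact absurd h Polynomial.X_ne_zero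
    · exact sub_eq_zero.mp h
  obtain ⟨hR1e, hQ0⟩ := sq_eq_X_mul_sq hRQ
  -- Step 5: set β = 0 in the reduced relation
  have e1rel2 := congrArg (ev1 (k := k)) hrel2
  simp only [map_add, map_mul, map_sub, map_one, map_pow, ev1_X0, ev1_X1,
    mul_zero, zero_mul, add_zero, zero_add] at e1rel2
  have hXP : Polynomial.X * ((ev1 P1) ^ 2 - Polynomial.X * (ev1 Q) ^ 2) = 0 := by
    linear_combination e1rel2
  have hPQ : (ev1 P1) ^ 2 = Polynomial.X * (ev1 Q) ^ 2 := by
    rcases mul_eq_zero.mp hXP with h | h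
    · exact absurd h Polynomial.X_ne_zero
    · exact sub_eq_zero.mp h
  obtain ⟨hP1e, hQ1⟩ := sq_eq_X_mul_sq hPQ
  -- assemble divisibilities
  obtain ⟨P2, hP2⟩ := (X1_dvd_iff P1).mpr hP1e
  obtain ⟨R2, hR2⟩ := (X0_dvd_iff R1).mpr hR1e
  obtain ⟨Qc, hQc⟩ := (X0_dvd_iff Q).mpr hQ0
  have hQc1 : ev1 Qc = 0 := by
    have : ev1 Q = 0 := hQ1
    rw [hQc, map_mul, ev1_X0] at this
    rcases mul_eq_zero.mp this with h | h
    · exact absurd h Polynomial.X_ne_zero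
    · exact h
  obtain ⟨Q2, hQ2⟩ := (X1_dvd_iff Qc).mpr hQc1
  have dP : X 0 * X 1 ∣ P := ⟨P2, by rw [hP1, hP2]; ring⟩
  have dQ : X 0 * X 1 ∣ Q := ⟨Q2, by rw [hQc, hQ2]; ring⟩
  have dR : X 0 * X 1 ∣ R := ⟨R2, by rw [hR1, hR2]; ring⟩
  refine ⟨dP, dQ, dR, fun hcop => ?_⟩
  exfalso
  have hu : IsUnit (X 0 * X 1 : MvPolynomial (Fin 2) k) := hcop _ dP dQ dR
  have := hu.map (ev0 (k := k))
  rw [map_mul, ev0_X0, zero_mul] at this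
  exact not_isUnit_zero this
end

section
/- Let k be a field of characteristic ≠ 2 containing an element ζ with ζ² = −1. Let F = k(s, t) be the rational function field in two variables over k, and let F(v) be the rational function field in one variable v over F. Then there exist elements a, α ∈ F(v) satisfying a²·t²·(1−t⁴) = α²·s²·(1−s⁴) + s²·t²·(s⁴−t⁴) such that the subfield F(a, α) of F(v) generated by a and α over F equals all of F(v). In other words, the conic a²t²(1−t⁴) = α²s²(1−s⁴) + s²t²(s⁴−t⁴) over F = k(s,t) has an F-rational point (e.g. (a,α) = (s,t)) and its function field is F-isomorphic to the rational function field F(v). -/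
open MvPolynomial

noncomputable section

/-- Any intermediate field of `RatFunc K / K` containing `RatFunc.X` is everything. -/
lemma adjoin_contains_X_eq_top {K : Type*} [Field K]
    (E : IntermediateField K (RatFunc K)) (hX : RatFunc.X ∈ E) : E = ⊤ := by
  rw [eq_top_iff]
  rintro x -
  have hp : ∀ p : Polynomial K, algebraMap (Polynomial K) (RatFunc K) p ∈ E := by
    intro p
    induction p using Polynomial.induction_on with
    | C a => rw [RatFunc.algebraMap_C, ← RatFunc.algebraMap_eq_C]; exact E.algebraMap_mem a
    | add p q hp hq => rw [map_add]; exact add_mem hp hq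
    | monomial n a hp =>
        rw [pow_succ, ← mul_assoc, map_mul, RatFunc.algebraMap_X]
        exact mul_mem hp hX
  rw [← RatFunc.num_div_denom x]
  exact div_mem (hp _) (hp _)


/-- The rational function field `F = k(s, t)` in two variables over `k`,
with `s = X 0`, `t = X 1`. -/
abbrev RatFunc2 (k : Type*) [Field k] : Type _ := FractionRing (MvPolynomial (Fin 2) k)

/-- The image of the `i`-th variable in `F = k(s, t)`. -/
def mv2 (k : Type*) [Field k] (i : Fin 2) : RatFunc2 k :=
  algebraMap (MvPolynomial (Fin 2) k) (RatFunc2 k) (X i)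

/-- The images of `s`, `t` in the rational function field `F(v)` in one variable over
`F = k(s, t)`. -/
def mv2' (k : Type*) [Field k] (i : Fin 2) : RatFunc (RatFunc2 k) :=
  algebraMap (RatFunc2 k) (RatFunc (RatFunc2 k)) (mv2 k i)

set_option synthInstance.maxHeartbeats 1000000 in
set_option maxHeartbeats 4000000 in
/-- **Key step of Corollary 2.8**: over `F = k(s, t)` (`char k ≠ 2`, `ζ² = -1` in `k`),
the conic `a²t²(1-t⁴) = α²s²(1-s⁴) + s²t²(s⁴-t⁴)` has the `F`-rational point
`(a, α) = (s, t)`, and its function field is `F`-isomorphic to the rational function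
field `F(v)`: there exist `a, α ∈ F(v)` satisfying the equation with `F(a, α) = F(v)`. -/
theorem conic_rational_point_and_rational (k : Type*) [Field k] (h2 : (2 : k) ≠ 0)
    (ζ : k) (hζ : ζ ^ 2 = -1) :
    (mv2 k 0 ^ 2 * mv2 k 1 ^ 2 * (1 - mv2 k 1 ^ 4) =
      mv2 k 1 ^ 2 * mv2 k 0 ^ 2 * (1 - mv2 k 0 ^ 4) +
        mv2 k 0 ^ 2 * mv2 k 1 ^ 2 * (mv2 k 0 ^ 4 - mv2 k 1 ^ 4)) ∧
    ∃ a α : RatFunc (RatFunc2 k),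
      a ^ 2 * mv2' k 1 ^ 2 * (1 - mv2' k 1 ^ 4) =
        α ^ 2 * mv2' k 0 ^ 2 * (1 - mv2' k 0 ^ 4) +
          mv2' k 0 ^ 2 * mv2' k 1 ^ 2 * (mv2' k 0 ^ 4 - mv2' k 1 ^ 4) ∧
      IntermediateField.adjoin (RatFunc2 k) ({a, α} : Set (RatFunc (RatFunc2 k))) = ⊤ := by
  -- notation
  set F := RatFunc2 k
  set L := RatFunc F
  have hinj : Function.Injective (algebraMap (MvPolynomial (Fin 2) k) F) :=
    IsFractionRing.injective _ _
  -- basic nonvanishing in F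
  have hXne : ∀ i : Fin 2, mv2 k i ≠ 0 := by
    intro i
    simp only [mv2, ne_eq, map_eq_zero_iff _ hinj]
    exact fun h => (X_ne_zero i : (X i : MvPolynomial (Fin 2) k) ≠ 0) (hinj (h.trans (map_zero _).symm))
  have hX4ne : ∀ i : Fin 2, (1 : F) - mv2 k i ^ 4 ≠ 0 := by
    intro i
    rw [sub_ne_zero]
    intro h
    have h' : algebraMap (MvPolynomial (Fin 2) k) F 1
        = algebraMap (MvPolynomial (Fin 2) k) F (X i ^ 4) := by
      rw [map_one, map_pow]; exact h
    have h'' : (1 : MvPolynomial (Fin 2) k) = X i ^ 4 := hinj h'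
    have hc := congrArg (coeff (Finsupp.single i 4)) h''
    simp [coeff_X_pow, MvPolynomial.coeff_one, Finsupp.single_eq_zero] at hc
    have hc' := congrArg (fun f => f i) hc
    simp at hc' 
  have h2F : (2 : F) ≠ 0 := by
    have h2M : (2 : MvPolynomial (Fin 2) k) ≠ 0 := by
      intro h
      apply h2
      have hC : MvPolynomial.C (2 : k) = (0 : MvPolynomial (Fin 2) k) := by
        rw [map_ofNat]; exact h
      exact MvPolynomial.C_eq_zero.mp hC
    have h2eq : (2 : F) = algebraMap (MvPolynomial (Fin 2) k) F 2 := by rw [map_ofNat]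
    rw [h2eq, ne_eq, map_eq_zero_iff _ hinj]
    exact h2M
  -- abbreviations in F
  set s : F := mv2 k 0 with hs_def
  set t : F := mv2 k 1 with ht_def
  have hs : s ≠ 0 := hXne 0
  have ht : t ≠ 0 := hXne 1
  set S : F := s ^ 2 * (1 - s ^ 4) with hS_def
  set T : F := t ^ 2 * (1 - t ^ 4) with hT_def
  have hS : S ≠ 0 := mul_ne_zero (pow_ne_zero _ hs) (hX4ne 0)
  have hT : T ≠ 0 := mul_ne_zero (pow_ne_zero _ ht) (hX4ne 1)
  -- part 1
  refine ⟨by ring, ?_⟩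
  -- now in L
  set sL : L := mv2' k 0 with hsL_def
  set tL : L := mv2' k 1 with htL_def
  have hsL : sL = RatFunc.C s := by rw [hsL_def, mv2', RatFunc.algebraMap_eq_C]
  have htL : tL = RatFunc.C t := by rw [htL_def, mv2', RatFunc.algebraMap_eq_C]
  set SL : L := sL ^ 2 * (1 - sL ^ 4) with hSL_def
  set TL : L := tL ^ 2 * (1 - tL ^ 4) with hTL_def
  have hSL : SL = RatFunc.C S := by rw [hSL_def, hS_def, hsL, map_mul, map_pow, map_sub, map_one, map_pow]
  have hTL : TL = RatFunc.C T := by rw [hTL_def, hT_def, htL, map_mul, map_pow, map_sub, map_one, map_pow]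
  -- the denominator and numerator are nonzero
  have hden : TL - RatFunc.X ^ 2 * SL ≠ 0 := by
    rw [hSL, hTL]
    have hP : (Polynomial.C T - Polynomial.C S * Polynomial.X ^ 2 : Polynomial F) ≠ 0 := by
      intro h
      have hc := congrArg (fun p => Polynomial.coeff p 2) h
      simp [Polynomial.coeff_C, Polynomial.coeff_C_mul, Polynomial.coeff_X_pow] at hc
      exact hS hc
    have hPim := RatFunc.algebraMap_ne_zero hP
    simp only [map_sub, map_mul, map_pow, RatFunc.algebraMap_C, RatFunc.algebraMap_X] at hPim
    intro h
    apply hPim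
    rw [← h]; ring
  have hnum : tL * RatFunc.X * SL - sL * TL ≠ 0 := by
    rw [hSL, hTL, hsL, htL]
    have hP : (Polynomial.C (t * S) * Polynomial.X - Polynomial.C (s * T) : Polynomial F) ≠ 0 := by
      intro h
      have hc := congrArg (fun p => Polynomial.coeff p 1) h
      simp [Polynomial.coeff_C, Polynomial.coeff_C_mul] at hc
      rcases hc with h | h
      exacts [ht h, hS h]
    have hPim := RatFunc.algebraMap_ne_zero hP
    simp only [map_sub, map_mul, RatFunc.algebraMap_C, RatFunc.algebraMap_X] at hPim
    intro h
    apply hPim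
    rw [← h]; ring
  have h2L : (2 : L) ≠ 0 := by
    have : (2 : L) = RatFunc.C (2 : F) := by rw [map_ofNat]
    rw [this, ne_eq, map_eq_zero]
    exact h2F
  -- the parametrization
  set u : L := 2 * (tL * RatFunc.X * SL - sL * TL) / (TL - RatFunc.X ^ 2 * SL) with hu_def
  have hu : u ≠ 0 := div_ne_zero (mul_ne_zero h2L hnum) hden
  refine ⟨sL + u, tL + RatFunc.X * u, ?_, ?_⟩
  · -- the conic equation
    have hkey : u * (TL - RatFunc.X ^ 2 * SL) = 2 * (tL * RatFunc.X * SL - sL * TL) := by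
      rw [hu_def, div_mul_cancel₀ _ hden]
    rw [hSL_def, hTL_def] at hkey
    linear_combination u * hkey
  · -- the adjoin is everything
    set E := IntermediateField.adjoin F ({sL + u, tL + RatFunc.X * u} : Set L) with hE_def
    apply adjoin_contains_X_eq_top
    have ha : sL + u ∈ E := IntermediateField.subset_adjoin _ _ (by left; rfl)
    have hα : tL + RatFunc.X * u ∈ E := IntermediateField.subset_adjoin _ _ (by right; rfl)
    have hsE : sL ∈ E := by rw [hsL_def, mv2']; exact E.algebraMap_mem _
    have htE : tL ∈ E := by rw [htL_def, mv2']; exact E.algebraMap_mem _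
    have hXeq : RatFunc.X = ((tL + RatFunc.X * u) - tL) * ((sL + u) - sL)⁻¹ := by
      rw [add_sub_cancel_left, add_sub_cancel_left, mul_inv_cancel_right₀ hu]
    rw [hXeq]
    exact mul_mem (sub_mem hα htE) (inv_mem (sub_mem ha hsE))
end
end
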